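/- There is a bijection between M_μ and the set of pairs (P, Q) of Φ-column-strict tableaux with sh(P) = sh(Q) and wt(P) = wt(Q) = μ. Equivalently, |M_μ| = Σ_λ N(λ,μ)², where the sum runs over all Φ-partitions λ and N(λ,μ) denotes the number of Φ-column-strict tableaux of shape λ and weight μ (only finitely many terms are nonzero). -/

import Mathlib

open Matrix Polynomial

/-- The set `M_μ` of `ℓ×ℓ` matrices of monic polynomials with nonzero constant term whose
degree row sums and degree column sums are both equal to `μ`. -/
def Mmu (F : Type) [Field F] (μ : List ℕ) :
    Set (Matrix (Fin μ.length) (Fin μ.length) (Polynomial F)) :=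
  {a | (∀ i j, (a i j).Monic ∧ Polynomial.eval 0 (a i j) ≠ 0) ∧
       (∀ i, (∑ j, (a i j).natDegree) = μ.get i) ∧
       (∀ j, (∑ i, (a i j).natDegree) = μ.get j)}

/-- `Φ` : the monic irreducible polynomials over `F` with nonzero constant term. -/
def PhiSet (F : Type) [Field F] : Type :=
  {f : Polynomial F // f.Monic ∧ Irreducible f ∧ Polynomial.eval 0 f ≠ 0}

/-- A `Φ`-indexed family of Young diagrams, each filled by a semistandard Young tableau.
Such a family with finite support, positive entries, is a `Φ`-column-strict tableau; its
shape is the `Φ`-partition `f ↦ (T f).1`. -/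
def PhiTab (F : Type) [Field F] : Type :=
  PhiSet F → Σ d : YoungDiagram, SemistandardYoungTableau d

/-- The shape of `T` is a genuine `Φ`-partition: only finitely many diagrams are nonempty. -/
def PhiTab.FinSupp {F : Type} [Field F] (T : PhiTab F) : Prop :=
  {f : PhiSet F | (T f).1 ≠ ⊥}.Finite

/-- All entries of the filled cells are positive integers. -/
def PhiTab.PosEntries {F : Type} [Field F] (T : PhiTab F) : Prop :=
  ∀ f : PhiSet F, ∀ c ∈ (T f).1.cells, 0 < (T f).2 c.1 c.2

/-- `Φ`-column-strict tableau: column strict (built into `SemistandardYoungTableau`),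
finitely supported, with positive integer entries. -/
def PhiTab.IsCS {F : Type} [Field F] (T : PhiTab F) : Prop :=
  T.FinSupp ∧ T.PosEntries

/-- The weight of a `Φ`-column-strict tableau:
`wt(T)_k = Σ_{f ∈ Φ} deg(f) · #\{entries of T^{(f)} equal to k\}`. -/
noncomputable def PhiTab.wt {F : Type} [Field F] (T : PhiTab F) (k : ℕ) : ℕ :=
  ∑ᶠ f : PhiSet F,
    f.1.natDegree * ((T f).1.cells.filter fun c => (T f).2 c.1 c.2 = k).card

/-- The weight of `T` is the composition `μ` (entries `1,…,ℓ` have multiplicities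
`μ₁,…,μ_ℓ`, all other values do not occur). -/
def PhiTab.HasWt {F : Type} [Field F] (T : PhiTab F) (μ : List ℕ) : Prop :=
  ∀ k : ℕ, T.wt (k + 1) = μ.getD k 0

namespace RSKP

/-- sequences representing partitions -/
abbrev Seq := ℕ → ℕ

/-- `HS x y` : `x ⊆ y` and `y/x` is a horizontal strip. -/
def HS (x y : Seq) : Prop := ∀ k, x k ≤ y k ∧ y (k+1) ≤ x k

lemma HS.le {x y : Seq} (h : HS x y) (k : ℕ) : x k ≤ y k := (h k).1
lemma HS.ir {x y : Seq} (h : HS x y) (k : ℕ) : y (k+1) ≤ x k := (h k).2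

lemma HS.anti_right {x y : Seq} (h : HS x y) : ∀ k, y (k+1) ≤ y k :=
  fun k => le_trans (h.ir k) (h.le k)

lemma HS.anti_left {x y : Seq} (h : HS x y) : ∀ k, x (k+1) ≤ x k :=
  fun k => le_trans (h.le (k+1)) (h.ir k)

lemma HS.refl_of (x : Seq) (hx : ∀ k, x (k+1) ≤ x k) : HS x x := fun k => ⟨le_rfl, hx k⟩

/-- forward local growth rule -/
def Fs (ν μ1 μ2 : Seq) (m : ℕ) : Seq
  | 0 => max (μ1 0) (μ2 0) + m
  | k+1 => max (μ1 (k+1)) (μ2 (k+1)) + min (μ1 k) (μ2 k) - ν k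

@[simp] lemma Fs_zero (ν μ1 μ2 : Seq) (m : ℕ) :
    Fs ν μ1 μ2 m 0 = max (μ1 0) (μ2 0) + m := rfl

@[simp] lemma Fs_succ (ν μ1 μ2 : Seq) (m k : ℕ) :
    Fs ν μ1 μ2 m (k+1) = max (μ1 (k+1)) (μ2 (k+1)) + min (μ1 k) (μ2 k) - ν k := rfl

/-- backward local rule: recovered `ν` -/
def Bv (lam μ1 μ2 : Seq) : Seq := fun k =>
  min (μ1 k) (μ2 k) + max (μ1 (k+1)) (μ2 (k+1)) - lam (k+1)

/-- backward local rule: recovered matrix entry -/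
def Bm (lam μ1 μ2 : Seq) : ℕ := lam 0 - max (μ1 0) (μ2 0)

section local_rules
variable {ν μ1 μ2 lam : Seq} {m : ℕ}

lemma HS_F1 (h1 : HS ν μ1) (h2 : HS ν μ2) : HS μ1 (Fs ν μ1 μ2 m) := by
  intro k
  cases k with
  | zero =>
    have a1 := (h1 0).2; have a2 := (h2 0).2; have b1 := (h1 0).1; have b2 := (h2 0).1
    constructor <;> simp only [Fs_zero, Fs_succ] <;> omega
  | succ k =>
    have a1 := (h1 (k+1)).2; have a2 := (h2 (k+1)).2
    have b1 := (h1 (k+1)).1; have b2 := (h2 (k+1)).1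
    have d1 := (h1 k).1; have d2 := (h2 k).1
    constructor <;> simp only [Fs_succ] <;> omega

lemma HS_F2 (h1 : HS ν μ1) (h2 : HS ν μ2) : HS μ2 (Fs ν μ1 μ2 m) := by
  intro k
  cases k with
  | zero =>
    have a1 := (h1 0).2; have a2 := (h2 0).2; have b1 := (h1 0).1; have b2 := (h2 0).1
    constructor <;> simp only [Fs_zero, Fs_succ] <;> omega
  | succ k =>
    have a1 := (h1 (k+1)).2; have a2 := (h2 (k+1)).2
    have b1 := (h1 (k+1)).1; have b2 := (h2 (k+1)).1
    have d1 := (h1 k).1; have d2 := (h2 k).1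
    constructor <;> simp only [Fs_succ] <;> omega

lemma Bv_Fs (h1 : HS ν μ1) (h2 : HS ν μ2) : Bv (Fs ν μ1 μ2 m) μ1 μ2 = ν := by
  funext k
  have a1 := (h1 k).2; have a2 := (h2 k).2
  have b1 := (h1 k).1; have b2 := (h2 k).1
  simp only [Bv, Fs_succ]; omega

lemma Bm_Fs : Bm (Fs ν μ1 μ2 m) μ1 μ2 = m := by
  simp only [Bm, Fs_zero]; omega

lemma HS_B1 (g1 : HS μ1 lam) (g2 : HS μ2 lam) : HS (Bv lam μ1 μ2) μ1 := by
  intro k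
  have a1 := (g1 (k+1)).1; have a2 := (g2 (k+1)).1
  have b1 := (g1 k).2; have b2 := (g2 k).2
  have c1 := (g1 (k+1)).2; have c2 := (g2 (k+1)).2
  constructor <;> simp only [Bv] <;> omega

lemma HS_B2 (g1 : HS μ1 lam) (g2 : HS μ2 lam) : HS (Bv lam μ1 μ2) μ2 := by
  intro k
  have a1 := (g1 (k+1)).1; have a2 := (g2 (k+1)).1
  have b1 := (g1 k).2; have b2 := (g2 k).2
  have c1 := (g1 (k+1)).2; have c2 := (g2 (k+1)).2
  constructor <;> simp only [Bv] <;> omega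

lemma Fs_Bv (g1 : HS μ1 lam) (g2 : HS μ2 lam) :
    Fs (Bv lam μ1 μ2) μ1 μ2 (Bm lam μ1 μ2) = lam := by
  funext k
  cases k with
  | zero => have := (g1 0).1; have := (g2 0).1; simp only [Fs_zero, Bm]; omega
  | succ k =>
    have a1 := (g1 (k+1)).1; have a2 := (g2 (k+1)).1
    have b1 := (g1 k).2; have b2 := (g2 k).2
    simp only [Fs_succ, Bv]; omega

/-- stability: inserting 0 with equal top/left context. -/
lemma Fs_self (h2 : HS ν μ2) : Fs ν ν μ2 0 = μ2 := by
  funext k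
  cases k with
  | zero => have := (h2 0).1; simp only [Fs_zero]; omega
  | succ k =>
    have a := (h2 (k+1)).1; have b := (h2 (k+1)).2; have c := (h2 k).1
    have d := (h2 k).2
    simp only [Fs_succ]; omega

/-- partial sums -/
def sz (x : Seq) (N : ℕ) : ℕ := ∑ k ∈ Finset.range N, x k

lemma sz_succ (x : Seq) (N : ℕ) : sz x (N+1) = sz x N + x N := Finset.sum_range_succ x N

@[simp] lemma sz_zero (x : Seq) : sz x 0 = 0 := rfl

lemma size_id (h1 : HS ν μ1) (h2 : HS ν μ2) (N : ℕ) :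
    sz (Fs ν μ1 μ2 m) (N+1) + sz ν N + min (μ1 N) (μ2 N)
      = sz μ1 (N+1) + sz μ2 (N+1) + m := by
  induction N with
  | zero =>
    have e0 : ∀ x : Seq, sz x 1 = x 0 := fun x => by simp [sz]
    rw [e0, e0, e0, Fs_zero]
    simp [sz]
    omega
  | succ N ih =>
    have hb := (h1 N).1; have hb2 := (h2 N).1
    have e : Fs ν μ1 μ2 m (N+1) + ν N = max (μ1 (N+1)) (μ2 (N+1)) + min (μ1 N) (μ2 N) := by
      simp only [Fs_succ]; omega
    have s1 := sz_succ (Fs ν μ1 μ2 m) (N+1)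
    have s2 := sz_succ ν N
    have s3 := sz_succ μ1 (N+1)
    have s4 := sz_succ μ2 (N+1)
    omega

end local_rules

end RSKP

namespace RSKP

/-- the zero sequence / empty partition -/
def zS : Seq := fun _ => 0

lemma HS_zS_zS : HS zS zS := fun _ => ⟨le_rfl, le_rfl⟩

/-- a chain of partitions (prefix version). -/
def IsChainN (p : ℕ → Seq) (n : ℕ) : Prop :=
  p 0 = zS ∧ ∀ j < n, HS (p j) (p (j+1))

/-- a global chain of partitions. -/
def IsChain (p : ℕ → Seq) : Prop :=
  p 0 = zS ∧ ∀ j, HS (p j) (p (j+1))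

lemma IsChain.toN {p : ℕ → Seq} (h : IsChain p) (n : ℕ) : IsChainN p n :=
  ⟨h.1, fun j _ => h.2 j⟩

/-- the new row of the growth diagram determined by old row `p` and matrix row `a`. -/
def nrow (p : ℕ → Seq) (a : ℕ → ℕ) : ℕ → Seq
  | 0 => zS
  | j+1 => Fs (p j) (p (j+1)) (nrow p a j) (a j)

@[simp] lemma nrow_zero (p : ℕ → Seq) (a : ℕ → ℕ) : nrow p a 0 = zS := rfl

lemma nrow_succ (p : ℕ → Seq) (a : ℕ → ℕ) (j : ℕ) :
    nrow p a (j+1) = Fs (p j) (p (j+1)) (nrow p a j) (a j) := rfl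

lemma nrow_congr {p p' : ℕ → Seq} {a a' : ℕ → ℕ} {j : ℕ}
    (hp : ∀ j' ≤ j, p j' = p' j') (ha : ∀ j' < j, a j' = a' j') :
    nrow p a j = nrow p' a' j := by
  induction j with
  | zero => rfl
  | succ j ih =>
    rw [nrow_succ, nrow_succ,
      ih (fun j' hj' => hp j' (hj'.trans (Nat.le_succ j))) (fun j' hj' => ha j' (hj'.trans (Nat.lt_succ_self j))),
      hp j (Nat.le_succ j), hp (j+1) le_rfl, ha j (Nat.lt_succ_self j)]

/-- vertical strips between old and new rows (prefix version). -/
lemma nrow_vert {p : ℕ → Seq} {a : ℕ → ℕ} {n : ℕ} (hp : IsChainN p n) :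
    ∀ j ≤ n, HS (p j) (nrow p a j) := by
  intro j hj
  induction j with
  | zero => rw [hp.1]; exact HS_zS_zS
  | succ j ih =>
    rw [nrow_succ]
    exact HS_F1 (hp.2 j hj) (ih (Nat.le_of_succ_le hj))

/-- the new row is a chain (prefix version). -/
lemma nrow_chain {p : ℕ → Seq} {a : ℕ → ℕ} {n : ℕ} (hp : IsChainN p n) :
    IsChainN (nrow p a) n := by
  refine ⟨rfl, fun j hj => ?_⟩
  rw [nrow_succ]
  exact HS_F2 (hp.2 j hj) (nrow_vert hp j hj.le)

lemma nrow_vert_glob {p : ℕ → Seq} {a : ℕ → ℕ} (hp : IsChain p) :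
    ∀ j, HS (p j) (nrow p a j) := fun j => nrow_vert (hp.toN (j+1)) j (Nat.le_succ j)

lemma nrow_chain_glob {p : ℕ → Seq} {a : ℕ → ℕ} (hp : IsChain p) :
    IsChain (nrow p a) :=
  ⟨rfl, fun j => (nrow_chain (hp.toN (j+1))).2 j (Nat.lt_succ_self j)⟩

/-- injectivity of one row-insertion step. -/
lemma nrow_inj : ∀ (n : ℕ) (p p' : ℕ → Seq) (a a' : ℕ → ℕ),
    IsChainN p n → IsChainN p' n →
    (∀ j ≤ n, nrow p a j = nrow p' a' j) → p n = p' n →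
    (∀ j ≤ n, p j = p' j) ∧ (∀ j < n, a j = a' j) := by
  intro n
  induction n with
  | zero =>
    intro p p' a a' hp hp' _ hpn
    exact ⟨fun j hj => by rw [Nat.le_zero] at hj; rw [hj, hp.1, hp'.1],
           fun j hj => absurd hj (Nat.not_lt_zero j)⟩
  | succ n ih =>
    intro p p' a a' hp hp' hq hpn
    have h1 := hp.2 n (Nat.lt_succ_self n)
    have h2 : HS (p n) (nrow p a n) := nrow_vert hp n (Nat.le_succ n)
    have h1' := hp'.2 n (Nat.lt_succ_self n)
    have h2' : HS (p' n) (nrow p' a' n) := nrow_vert hp' n (Nat.le_succ n)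
    have e1 : p n = p' n := by
      have b1 := Bv_Fs (m := a n) h1 h2
      have b2 := Bv_Fs (m := a' n) h1' h2'
      rw [← b1, ← b2, ← nrow_succ, ← nrow_succ, hq (n+1) le_rfl, hq n (Nat.le_succ n), hpn]
    have e2 : a n = a' n := by
      have b1 := Bm_Fs (ν := p n) (μ1 := p (n+1)) (μ2 := nrow p a n) (m := a n) 
      have b2 := Bm_Fs (ν := p' n) (μ1 := p' (n+1)) (μ2 := nrow p' a' n) (m := a' n)
      rw [← b1, ← b2, ← nrow_succ, ← nrow_succ, hq (n+1) le_rfl, hq n (Nat.le_succ n), hpn]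
    have hpN : IsChainN p n := ⟨hp.1, fun j hj => hp.2 j (hj.trans (Nat.lt_succ_self n))⟩
    have hpN' : IsChainN p' n := ⟨hp'.1, fun j hj => hp'.2 j (hj.trans (Nat.lt_succ_self n))⟩
    obtain ⟨r1, r2⟩ := ih p p' a a' hpN hpN' (fun j hj => hq j (hj.trans (Nat.le_succ n))) e1
    constructor
    · intro j hj
      rcases Nat.lt_succ_iff_lt_or_eq.mp (Nat.lt_succ_of_le hj) with h | h
      · exact r1 j (Nat.lt_succ_iff.mp h)
      · rw [h, hpn]
    · intro j hj
      rcases Nat.lt_succ_iff_lt_or_eq.mp hj with h | h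
      · exact r2 j h
      · rw [h, e2]

/-- surjectivity of one row-insertion step. -/
lemma nrow_surj : ∀ (n : ℕ) (q' : ℕ → Seq) (t : Seq),
    IsChainN q' n → HS t (q' n) →
    ∃ (p : ℕ → Seq) (a : ℕ → ℕ),
      IsChainN p n ∧ p n = t ∧ (∀ j ≤ n, nrow p a j = q' j) := by
  intro n
  induction n with
  | zero =>
    intro q' t hq ht
    have ht0 : t = zS := by
      funext k
      have := ht.le k
      rw [hq.1] at this
      exact Nat.le_zero.mp this
    exact ⟨fun _ => zS, fun _ => 0, ⟨rfl, fun j hj => absurd hj (Nat.not_lt_zero j)⟩, ht0.symm,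
      fun j hj => by rw [Nat.le_zero] at hj; rw [hj, nrow_zero, hq.1]⟩
  | succ n ih =>
    intro q' t hq ht
    set ν := Bv (q' (n+1)) t (q' n) with hν
    set m := Bm (q' (n+1)) t (q' n) with hm
    have g2 : HS (q' n) (q' (n+1)) := hq.2 n (Nat.lt_succ_self n)
    have hb1 : HS ν t := HS_B1 ht g2
    have hb2 : HS ν (q' n) := HS_B2 ht g2
    have hqN : IsChainN q' n := ⟨hq.1, fun j hj => hq.2 j (hj.trans (Nat.lt_succ_self n))⟩
    obtain ⟨p, a, hpc, hpn, hrow⟩ := ih q' ν hqN hb2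
    refine ⟨fun j => if j = n+1 then t else p j, fun j => if j = n then m else a j, ?_, by simp, ?_⟩
    · constructor
      · simp [Nat.succ_ne_zero, hpc.1]
      · intro j hj
        rcases Nat.lt_succ_iff_lt_or_eq.mp hj with h | h
        · have hj1 : j + 1 ≠ n + 1 := by omega
          have hj0 : j ≠ n + 1 := by omega
          simp only [if_neg hj0, if_neg hj1]; exact hpc.2 j h
        · subst h
          have hj0 : j ≠ j + 1 := by omega
          simpa [hj0, hpn] using hb1
    · intro j hj
      rcases Nat.lt_succ_iff_lt_or_eq.mp (Nat.lt_succ_of_le hj) with h | h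
      · have hj' : j ≤ n := Nat.lt_succ_iff.mp h
        rw [← hrow j hj']
        exact nrow_congr (fun j' hj' => by
            have : j' ≠ n + 1 := by omega
            simp [this])
          (fun j' hj'' => by
            have : j' ≠ n := by omega
            simp [this])
      · subst h
        rw [nrow_succ]
        have e1 : (fun j => if j = n+1 then t else p j) n = ν := by
          have : n ≠ n + 1 := by omega
          simp [this, hpn]
        have e2 : (fun j => if j = n+1 then t else p j) (n+1) = t := by simp
        have e3 : nrow (fun j => if j = n+1 then t else p j) (fun j => if j = n then m else a j) n
            = q' n := by
          rw [← hrow n le_rfl]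
          exact nrow_congr (fun j' hj' => by
              have : j' ≠ n + 1 := by omega
              simp [this])
            (fun j' hj'' => by
              have : j' ≠ n := by omega
              simp [this])
        have e4 : (fun j => if j = n then m else a j) n = m := by simp
        have hne : n ≠ n + 1 := by omega
        rw [if_neg hne, if_pos rfl, if_pos rfl, e3, hpn, hν, hm]
        exact Fs_Bv ht g2

end RSKP

namespace RSKP

lemma Fs_self2 {ν μ1 : Seq} (h : HS ν μ1) : Fs ν μ1 ν 0 = μ1 := by
  funext k
  cases k with
  | zero => have := (h 0).1; simp only [Fs_zero]; omega
  | succ k =>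
    have a := (h (k+1)).1; have b := (h (k+1)).2; have c := (h k).1
    simp only [Fs_succ]; omega

/-- the growth diagram of a matrix. -/
def grid (A : ℕ → ℕ → ℕ) : ℕ → ℕ → Seq
  | 0 => fun _ => zS
  | i+1 => nrow (grid A i) (A i)

@[simp] lemma grid_zero (A : ℕ → ℕ → ℕ) : grid A 0 = fun _ => zS := rfl

lemma grid_succ (A : ℕ → ℕ → ℕ) (i : ℕ) : grid A (i+1) = nrow (grid A i) (A i) := rfl

lemma grid_chain (A : ℕ → ℕ → ℕ) (i : ℕ) : IsChain (grid A i) := by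
  induction i with
  | zero => exact ⟨rfl, fun j => HS_zS_zS⟩
  | succ i ih => exact nrow_chain_glob ih

lemma grid_vert (A : ℕ → ℕ → ℕ) (i j : ℕ) : HS (grid A i j) (grid A (i+1) j) :=
  nrow_vert_glob (grid_chain A i) j

lemma grid_congr {A A' : ℕ → ℕ → ℕ} : ∀ i, (∀ i' < i, A i' = A' i') → grid A i = grid A' i := by
  intro i
  induction i with
  | zero => intro _; rfl
  | succ i ih =>
    intro h
    rw [grid_succ, grid_succ, ih (fun i' hi' => h i' (hi'.trans (Nat.lt_succ_self i))),
      h i (Nat.lt_succ_self i)]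

lemma grid_vanish (A : ℕ → ℕ → ℕ) : ∀ i j k, i ≤ k → grid A i j k = 0 := by
  intro i
  induction i with
  | zero => intro j k _; rfl
  | succ i ih =>
    intro j k hk
    cases j with
    | zero => rfl
    | succ j =>
      obtain ⟨k', rfl⟩ : ∃ k', k = k' + 1 := ⟨k - 1, by omega⟩
      rw [grid_succ]
      have := ((nrow_vert_glob (a := A i) (grid_chain A i) (j+1)).ir k')
      have h0 := ih (j+1) k' (by omega)
      omega

/-- matrix entries are recovered from the boundary chains. -/
lemma grid_inj (n : ℕ) : ∀ (i : ℕ) (A A' : ℕ → ℕ → ℕ),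
    (∀ j ≤ n, grid A i j = grid A' i j) → (∀ k ≤ i, grid A k n = grid A' k n) →
    ∀ i' < i, ∀ j < n, A i' j = A' i' j := by
  intro i
  induction i with
  | zero => intro A A' _ _ i' hi'; exact absurd hi' (Nat.not_lt_zero i')
  | succ i ih =>
    intro A A' hbot hright i' hi' j hj
    have hrow := nrow_inj n (grid A i) (grid A' i) (A i) (A' i)
      ((grid_chain A i).toN n) ((grid_chain A' i).toN n)
      (fun j' hj' => by rw [← grid_succ, ← grid_succ]; exact hbot j' hj')
      (hright i (Nat.le_succ i))
    rcases Nat.lt_succ_iff_lt_or_eq.mp hi' with h | h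
    · exact ih A A' (fun j' hj' => hrow.1 j' hj') (fun k hk => hright k (hk.trans (Nat.le_succ i)))
        i' h j hj
    · rw [h]; exact hrow.2 j hj

lemma chain_mono {q : ℕ → Seq} {n : ℕ} (hq : IsChainN q n) :
    ∀ j ≤ n, ∀ k, q j k ≤ q n k := by
  intro j hj
  induction n with
  | zero => intro k; rw [Nat.le_zero.mp hj]
  | succ n ih =>
    intro k
    rcases Nat.lt_succ_iff_lt_or_eq.mp (Nat.lt_succ_of_le hj) with h | h
    · have hqN : IsChainN q n := ⟨hq.1, fun j' hj' => hq.2 j' (hj'.trans (Nat.lt_succ_self n))⟩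
      exact le_trans (ih hqN (Nat.lt_succ_iff.mp h) k) ((hq.2 n (Nat.lt_succ_self n)).le k)
    · rw [h]

/-- every compatible boundary pair is achieved. -/
lemma grid_surj (n : ℕ) : ∀ (i : ℕ) (q r : ℕ → Seq),
    IsChainN q n → r 0 = zS → (∀ k < i, HS (r k) (r (k+1))) → r i = q n →
    ∃ A : ℕ → ℕ → ℕ,
      (∀ i' j, (n ≤ j → A i' j = 0) ∧ (i ≤ i' → A i' j = 0)) ∧
      (∀ j ≤ n, grid A i j = q j) ∧ (∀ k ≤ i, grid A k n = r k) := by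
  intro i
  induction i with
  | zero =>
    intro q r hq hr0 _ hri
    have hqz : ∀ j ≤ n, q j = zS := by
      intro j hj
      funext k
      have := chain_mono hq j hj k
      rw [← hri, hr0] at this
      exact Nat.le_zero.mp this
    refine ⟨fun _ _ => 0, fun i' j => ⟨fun _ => rfl, fun _ => rfl⟩, ?_, ?_⟩
    · intro j hj; rw [hqz j hj]; rfl
    · intro k hk; rw [Nat.le_zero.mp hk, hr0]; rfl
  | succ i ih =>
    intro q r hq hr0 hrc hri
    have hstrip : HS (r i) (q n) := by
      rw [← hri]; exact hrc i (Nat.lt_succ_self i)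
    obtain ⟨p, a, hpc, hpn, hrow⟩ := nrow_surj n q (r i) hq hstrip
    obtain ⟨A', hA's, hA'bot, hA'right⟩ := ih p r hpc hr0
      (fun k hk => hrc k (hk.trans (Nat.lt_succ_self i))) hpn.symm
    set A : ℕ → ℕ → ℕ := fun i' j => if i' = i then (if j < n then a j else 0) else A' i' j
      with hA
    have hAlow : ∀ k ≤ i, grid A k = grid A' k := by
      intro k hk
      exact grid_congr k (fun i' hi' => by
        have : i' ≠ i := by omega
        funext j; simp [hA, this])
    refine ⟨A, ?_, ?_, ?_⟩
    · intro i' j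
      constructor
      · intro hnj
        by_cases h : i' = i
        · simp [hA, h, Nat.not_lt.mpr hnj]
        · simp only [hA, if_neg h]; exact (hA's i' j).1 hnj
      · intro hii'
        have h : i' ≠ i := by omega
        simp only [hA, if_neg h]; exact (hA's i' j).2 (by omega)
    · intro j hj
      rw [grid_succ, hAlow i le_rfl]
      have : nrow (grid A' i) (A i) j = nrow p a j := by
        refine nrow_congr (fun j' hj' => hA'bot j' (hj'.trans hj)) (fun j' hj' => ?_)
        have h1 : j' < n := lt_of_lt_of_le hj' hj
        simp [hA, h1]
      rw [this, hrow j hj]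
    · intro k hk
      rcases Nat.lt_succ_iff_lt_or_eq.mp (Nat.lt_succ_of_le hk) with h | h
      · have hk' : k ≤ i := Nat.lt_succ_iff.mp h
        rw [hAlow k hk', hA'right k hk']
      · subst h
        rw [grid_succ, hAlow i le_rfl]
        have : nrow (grid A' i) (A i) n = nrow p a n := by
          refine nrow_congr (fun j' hj' => hA'bot j' hj') (fun j' hj' => by simp [hA, hj'])
        rw [this, hrow n le_rfl, hri]

/-- size bookkeeping for one cell of the growth diagram. -/
lemma sz_nrow {p : ℕ → Seq} {a : ℕ → ℕ} {N : ℕ} (hp : IsChain p)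
    (hvp : ∀ j, p j N = 0) (hvq : ∀ j, nrow p a j N = 0) (j : ℕ) :
    sz (nrow p a (j+1)) N + sz (p j) N = sz (p (j+1)) N + sz (nrow p a j) N + a j := by
  have hid := size_id (m := a j) (hp.2 j) (nrow_vert_glob (a := a) hp j) N
  rw [nrow_succ] at *
  have s1 := sz_succ (Fs (p j) (p (j+1)) (nrow p a j) (a j)) N
  have s2 := sz_succ (p (j+1)) N
  have s3 := sz_succ (nrow p a j) N
  have v1 := hvq (j+1)
  rw [nrow_succ] at v1
  have v2 := hvp (j+1)
  have v3 := hvq j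
  omega

@[simp] lemma sz_zS (N : ℕ) : sz zS N = 0 := by simp [sz, zS]

lemma grid_cell_size (A : ℕ → ℕ → ℕ) {N : ℕ} (i j : ℕ) (hiN : i + 1 ≤ N) :
    sz (grid A (i+1) (j+1)) N + sz (grid A i j) N
      = sz (grid A i (j+1)) N + sz (grid A (i+1) j) N + A i j := by
  rw [grid_succ]
  exact sz_nrow (grid_chain A i) (fun j' => grid_vanish A i j' N (by omega))
    (fun j' => by rw [← grid_succ]; exact grid_vanish A (i+1) j' N hiN) j

lemma grid_rowsum (A : ℕ → ℕ → ℕ) {N : ℕ} (i : ℕ) (hiN : i + 1 ≤ N) (n : ℕ) :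
    sz (grid A (i+1) n) N = sz (grid A i n) N + ∑ j ∈ Finset.range n, A i j := by
  induction n with
  | zero =>
    have e1 : grid A (i+1) 0 = zS := ((grid_chain A (i+1)).1)
    have e2 : grid A i 0 = zS := ((grid_chain A i).1)
    rw [e1, e2]; simp
  | succ n ih =>
    have := grid_cell_size A i n hiN
    rw [Finset.sum_range_succ]
    omega

lemma grid_colsum (A : ℕ → ℕ → ℕ) {N : ℕ} (j : ℕ) :
    ∀ i, i ≤ N → sz (grid A i (j+1)) N = sz (grid A i j) N + ∑ i' ∈ Finset.range i, A i' j := by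
  intro i
  induction i with
  | zero => intro _; simp [grid_zero]
  | succ i ih =>
    intro hi
    have h1 := grid_cell_size A i j hi
    have h2 := ih (by omega)
    rw [Finset.sum_range_succ]
    omega

end RSKP

namespace RSKP

/-- rows stabilize when inserting zeros with stabilized previous row. -/
lemma nrow_stab {p : ℕ → Seq} {a : ℕ → ℕ} {n : ℕ} (hp : IsChain p)
    (hps : ∀ j, n ≤ j → p j = p n) (ha : ∀ j, n ≤ j → a j = 0) :
    ∀ j, n ≤ j → nrow p a j = nrow p a n := by
  intro j hj
  induction j, hj using Nat.le_induction with
  | base => rfl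
  | succ j hj ih =>
    rw [nrow_succ, hps (j+1) (by omega), hps j hj, ha j hj]
    rw [Fs_self ?h2, ih]
    case h2 =>
      have := nrow_vert_glob (a := a) hp j
      rwa [hps j hj] at this

/-- inserting an all-zero row leaves the row unchanged. -/
lemma nrow_zero_row {p : ℕ → Seq} {a : ℕ → ℕ} (hp : IsChain p) (ha : ∀ j, a j = 0) :
    nrow p a = p := by
  funext j
  induction j with
  | zero => rw [nrow_zero, hp.1]
  | succ j ih => rw [nrow_succ, ih, ha j, Fs_self2 (hp.2 j)]

variable (ℓ : ℕ)

/-- pairs of chains of partitions with the same top, stabilized at `ℓ`. -/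
def CP : Type :=
  {qr : (ℕ → Seq) × (ℕ → Seq) //
    IsChain qr.1 ∧ IsChain qr.2 ∧ (∀ j, ℓ ≤ j → qr.1 j = qr.1 ℓ) ∧
    (∀ i, ℓ ≤ i → qr.2 i = qr.2 ℓ) ∧ qr.1 ℓ = qr.2 ℓ}

variable {ℓ}

/-- extension of a matrix by zeros -/
def Ae (A : Matrix (Fin ℓ) (Fin ℓ) ℕ) : ℕ → ℕ → ℕ := fun i j =>
  if h : i < ℓ ∧ j < ℓ then A ⟨i, h.1⟩ ⟨j, h.2⟩ else 0

lemma grid_stab (A : Matrix (Fin ℓ) (Fin ℓ) ℕ) :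
    ∀ i j, ℓ ≤ j → grid (Ae A) i j = grid (Ae A) i ℓ := by
  intro i
  induction i with
  | zero => intro j _; rfl
  | succ i ih =>
    intro j hj
    rw [grid_succ]
    exact nrow_stab (grid_chain _ i) ih
      (fun j' hj' => by simp only [Ae]; rw [dif_neg (by omega)]) j hj

lemma grid_stab_row (A : Matrix (Fin ℓ) (Fin ℓ) ℕ) :
    ∀ i, ℓ ≤ i → grid (Ae A) i = grid (Ae A) ℓ := by
  intro i hi
  induction i, hi using Nat.le_induction with
  | base => rfl
  | succ i hi ih =>
    have hz : nrow (grid (Ae A) i) (Ae A i) = grid (Ae A) i :=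
      nrow_zero_row (grid_chain _ i) (fun j => by simp only [Ae]; rw [dif_neg (by omega)])
    rw [grid_succ, hz, ih]

/-- the RSK map, sending a matrix to its pair of boundary chains
(`q` = bottom chain / `P`-side recording column sums,
 `r` = right chain / `Q`-side recording row sums). -/
def rsk (A : Matrix (Fin ℓ) (Fin ℓ) ℕ) : CP ℓ :=
  ⟨(fun j => grid (Ae A) ℓ j, fun i => grid (Ae A) i ℓ),
   grid_chain (Ae A) ℓ,
   ⟨rfl, fun i => grid_vert (Ae A) i ℓ⟩,
   fun j hj => grid_stab A ℓ j hj,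
   fun i hi => congrFun (grid_stab_row A i hi) ℓ,
   rfl⟩

lemma rsk_q (A : Matrix (Fin ℓ) (Fin ℓ) ℕ) : (rsk A).1.1 = fun j => grid (Ae A) ℓ j := rfl
lemma rsk_r (A : Matrix (Fin ℓ) (Fin ℓ) ℕ) : (rsk A).1.2 = fun i => grid (Ae A) i ℓ := rfl

lemma rsk_bijective : Function.Bijective (rsk (ℓ := ℓ)) := by
  constructor
  · intro A A' h
    have h' : (rsk A).1 = (rsk A').1 := congrArg Subtype.val h
    have hq : ∀ j, grid (Ae A) ℓ j = grid (Ae A') ℓ j := by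
      intro j
      have := congrArg Prod.fst h'
      rw [rsk_q, rsk_q] at this
      exact congrFun this j
    have hr : ∀ i, grid (Ae A) i ℓ = grid (Ae A') i ℓ := by
      intro i
      have := congrArg Prod.snd h'
      rw [rsk_r, rsk_r] at this
      exact congrFun this i
    have := grid_inj ℓ ℓ (Ae A) (Ae A') (fun j _ => hq j) (fun k _ => hr k)
    funext i j
    have h2 := this i.1 i.2 j.1 j.2
    simpa [Ae, i.2, j.2] using h2
  · rintro ⟨⟨q, r⟩, hq, hr, hqs, hrs, htop⟩
    dsimp only at hq hr hqs hrs htop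
    obtain ⟨A₀, hsupp, hbot, hright⟩ := grid_surj ℓ ℓ q r (hq.toN ℓ) hr.1
      (fun k _ => hr.2 k) htop.symm
    refine ⟨fun i j => A₀ i.1 j.1, ?_⟩
    have hAe : Ae (fun i j : Fin ℓ => A₀ i.1 j.1) = A₀ := by
      funext i j
      by_cases h : i < ℓ ∧ j < ℓ
      · simp [Ae, h]
      · simp only [Ae]; rw [dif_neg h]
        rcases not_and_or.mp h with h | h
        · exact ((hsupp i j).2 (by omega)).symm
        · exact ((hsupp i j).1 (by omega)).symm
    have key1 : ∀ j, grid A₀ ℓ j = q j := by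
      intro j
      by_cases hj : j ≤ ℓ
      · exact hbot j hj
      · rw [← hAe, grid_stab (fun i j : Fin ℓ => A₀ i.1 j.1) ℓ j (by omega), hAe, hbot ℓ le_rfl, hqs j (by omega)]
    have key2 : ∀ i, grid A₀ i ℓ = r i := by
      intro i
      by_cases hi : i ≤ ℓ
      · exact hright i hi
      · rw [← hAe, congrFun (grid_stab_row (fun i j : Fin ℓ => A₀ i.1 j.1) i (by omega)) ℓ, hAe, hright ℓ le_rfl,
          hrs i (by omega)]
    apply Subtype.ext
    apply Prod.ext
    · rw [rsk_q (fun i j : Fin ℓ => A₀ i.1 j.1)]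
      funext j
      dsimp only
      rw [hAe]
      exact key1 j
    · rw [rsk_r (fun i j : Fin ℓ => A₀ i.1 j.1)]
      funext i
      dsimp only
      rw [hAe]
      exact key2 i

/-- column sums of the matrix are the increments of the `q` chain. -/
lemma rsk_colsum (A : Matrix (Fin ℓ) (Fin ℓ) ℕ) (j : ℕ) :
    sz ((rsk A).1.1 (j+1)) ℓ = sz ((rsk A).1.1 j) ℓ + ∑ i' ∈ Finset.range ℓ, Ae A i' j := by
  rw [rsk_q]
  exact grid_colsum (Ae A) j ℓ le_rfl

/-- row sums of the matrix are the increments of the `r` chain. -/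
lemma rsk_rowsum (A : Matrix (Fin ℓ) (Fin ℓ) ℕ) (i : ℕ) (hi : i < ℓ) :
    sz ((rsk A).1.2 (i+1)) ℓ = sz ((rsk A).1.2 i) ℓ + ∑ j ∈ Finset.range ℓ, Ae A i j := by
  rw [rsk_r]
  exact grid_rowsum (Ae A) (N := ℓ) i hi ℓ

end RSKP

namespace RSKP

lemma nat_eq_of_lt_iff {a b : ℕ} (h : ∀ j, j < a ↔ j < b) : a = b := by
  have h1 := h a; have h2 := h b; omega

lemma nat_le_of_lt_imp {a b : ℕ} (h : ∀ j, j < a → j < b) : a ≤ b := by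
  cases a with
  | zero => exact Nat.zero_le b
  | succ a => exact h a (Nat.lt_succ_self a)

/-- downward closed subsets of `range n` are initial segments -/
lemma down_closed_eq_range : ∀ (n : ℕ) (S : Finset ℕ), S ⊆ Finset.range n →
    (∀ a b : ℕ, a ≤ b → b ∈ S → a ∈ S) → S = Finset.range S.card := by
  intro n
  induction n with
  | zero =>
    intro S hS _
    have : S = ∅ := Finset.subset_empty.mp (by simpa using hS)
    simp [this]
  | succ n ih =>
    intro S hS hd
    by_cases hn : n ∈ S
    · have hSr : S = Finset.range (n+1) := by
        apply Finset.Subset.antisymm hS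
        intro k hk
        exact hd k n (Nat.lt_succ_iff.mp (Finset.mem_range.mp hk)) hn
      rw [hSr, Finset.card_range]
    · have hS' : S ⊆ Finset.range n := by
        intro k hk
        have h1 := Finset.mem_range.mp (hS hk)
        have h2 : k ≠ n := fun h => hn (h ▸ hk)
        exact Finset.mem_range.mpr (by omega)
      exact ih S hS' hd

lemma down_count {n : ℕ} {P : ℕ → Prop} [DecidablePred P]
    (hd : ∀ a b : ℕ, a ≤ b → b < n → P b → P a) :
    ∀ k < n, (P k ↔ k < ((Finset.range n).filter P).card) := by
  intro k hk
  have heq := down_closed_eq_range n ((Finset.range n).filter P) (Finset.filter_subset _ _)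
    (fun a b hab hb => by
      have hb' := Finset.mem_filter.mp hb
      exact Finset.mem_filter.mpr ⟨Finset.mem_range.mpr
        (lt_of_le_of_lt hab (Finset.mem_range.mp hb'.1)),
        hd a b hab (Finset.mem_range.mp hb'.1) hb'.2⟩)
  constructor
  · intro hP
    have : k ∈ (Finset.range n).filter P := Finset.mem_filter.mpr ⟨Finset.mem_range.mpr hk, hP⟩
    rw [heq] at this
    exact Finset.mem_range.mp this
  · intro hlt
    have : k ∈ Finset.range ((Finset.range n).filter P).card := Finset.mem_range.mpr hlt
    rw [← heq] at this
    exact (Finset.mem_filter.mp this).2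

/-- the Young diagram of a partition given as a vanishing antitone sequence. -/
def toYD (x : Seq) (hx : ∀ k, x (k+1) ≤ x k) (N : ℕ) (hN : x N = 0) : YoungDiagram where
  cells := (Finset.range N ×ˢ Finset.range (x 0)).filter (fun c => c.2 < x c.1)
  isLowerSet := by
    intro c1 c2 hle hmem
    have hanti : Antitone x := antitone_nat_of_succ_le hx
    simp only [Finset.coe_filter, Set.mem_setOf_eq, Finset.mem_coe, Finset.mem_product,
      Finset.mem_range] at hmem ⊢
    obtain ⟨⟨ha, hb⟩, hc⟩ := hmem
    have h1 : c2.1 ≤ c1.1 := hle.1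
    have h2 : c2.2 ≤ c1.2 := hle.2
    have h3 : x c1.1 ≤ x c2.1 := hanti h1
    exact ⟨⟨by omega, by omega⟩, by omega⟩

lemma mem_toYD {x : Seq} {hx : ∀ k, x (k+1) ≤ x k} {N : ℕ} {hN : x N = 0} {c : ℕ × ℕ} :
    c ∈ (toYD x hx N hN).cells ↔ c.2 < x c.1 := by
  have hanti : Antitone x := antitone_nat_of_succ_le hx
  simp only [toYD, Finset.mem_filter, Finset.mem_product, Finset.mem_range]
  constructor
  · exact fun h => h.2
  · intro h
    refine ⟨⟨?_, ?_⟩, h⟩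
    · by_contra hc
      have : x c.1 ≤ x N := hanti (by omega)
      omega
    · have : x c.1 ≤ x 0 := hanti (Nat.zero_le _)
      omega

lemma toYD_rowLen {x : Seq} {hx : ∀ k, x (k+1) ≤ x k} {N : ℕ} {hN : x N = 0} (i : ℕ) :
    (toYD x hx N hN).rowLen i = x i := by
  refine nat_eq_of_lt_iff (fun j => ?_)
  rw [← YoungDiagram.mem_iff_lt_rowLen, ← YoungDiagram.mem_cells, mem_toYD]

lemma YD_rowLen_inj {d d' : YoungDiagram} (h : ∀ i, d.rowLen i = d'.rowLen i) : d = d' := by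
  have : d.cells = d'.cells := by
    ext c
    obtain ⟨i, j⟩ := c
    rw [YoungDiagram.mem_cells, YoungDiagram.mem_cells, YoungDiagram.mem_iff_lt_rowLen,
      YoungDiagram.mem_iff_lt_rowLen, h i]
  cases d; cases d'; simpa using this

lemma rowLen_bot (i : ℕ) : (⊥ : YoungDiagram).rowLen i = 0 := by
  refine nat_eq_of_lt_iff (fun j => ?_)
  rw [← YoungDiagram.mem_iff_lt_rowLen]
  simp [YoungDiagram.notMem_bot]

lemma toYD_bot {hx : ∀ k : ℕ, zS (k+1) ≤ zS k} {N : ℕ} {hN : zS N = 0} :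
    toYD zS hx N hN = ⊥ := by
  refine YD_rowLen_inj (fun i => ?_)
  rw [toYD_rowLen, rowLen_bot]; rfl

variable {ℓ : ℕ}

/-- chains stabilized at `ℓ` -/
def SC (ℓ : ℕ) : Type := {c : ℕ → Seq // IsChain c ∧ ∀ j, ℓ ≤ j → c j = c ℓ}

lemma sc_anti (c : SC ℓ) : ∀ j k, c.1 j (k+1) ≤ c.1 j k := by
  intro j k
  cases j with
  | zero => rw [c.2.1.1]; exact le_rfl
  | succ j => exact (c.2.1.2 j).anti_right k

lemma sc_mono (c : SC ℓ) (i : ℕ) : Monotone (fun k => c.1 k i) :=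
  monotone_nat_of_le_succ (fun k => (c.2.1.2 k).le i)

lemma sc_le_top (c : SC ℓ) (k i : ℕ) : c.1 k i ≤ c.1 ℓ i := by
  by_cases hk : k ≤ ℓ
  · exact sc_mono c i hk
  · rw [c.2.2 k (by omega)]

lemma sc_vanish (c : SC ℓ) : ∀ j k, j ≤ k → c.1 j k = 0 := by
  intro j
  induction j with
  | zero => intro k _; rw [c.2.1.1]; rfl
  | succ j ih =>
    intro k hk
    obtain ⟨k', rfl⟩ : ∃ k', k = k' + 1 := ⟨k - 1, by omega⟩
    have h1 := (c.2.1.2 j).ir k'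
    have h2 := ih k' (by omega)
    omega

/-- the entry function of the tableau associated to a chain -/
def entOf (c : ℕ → Seq) (ℓ : ℕ) (i j : ℕ) : ℕ :=
  if j < c ℓ i then ((Finset.range (ℓ+1)).filter (fun k => c k i ≤ j)).card else 0

lemma entOf_char (c : SC ℓ) {i j : ℕ} (hj : j < c.1 ℓ i) :
    ∀ k ≤ ℓ, (c.1 k i ≤ j ↔ k < entOf c.1 ℓ i j) := by
  intro k hk
  rw [entOf, if_pos hj]
  exact down_count (P := fun k => c.1 k i ≤ j)
    (fun a b hab _ hb => le_trans (sc_mono c i hab) hb) k (by omega)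

lemma entOf_pos (c : SC ℓ) {i j : ℕ} (hj : j < c.1 ℓ i) : 0 < entOf c.1 ℓ i j := by
  have := (entOf_char c hj 0 (Nat.zero_le ℓ)).mp (by rw [c.2.1.1]; exact Nat.zero_le j)
  omega

lemma entOf_le (c : SC ℓ) {i j : ℕ} (hj : j < c.1 ℓ i) : entOf c.1 ℓ i j ≤ ℓ := by
  have := (entOf_char c hj ℓ le_rfl)
  omega

/-- the semistandard tableau associated to a stabilized chain. -/
def chainTab (c : SC ℓ) : Σ d : YoungDiagram, SemistandardYoungTableau d :=
  ⟨toYD (c.1 ℓ) (sc_anti c ℓ) ℓ (sc_vanish c ℓ ℓ le_rfl),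
   { entry := entOf c.1 ℓ
     row_weak' := by
       intro i j1 j2 hj hcell
       rw [← YoungDiagram.mem_cells, mem_toYD] at hcell
       dsimp only at hcell
       have hj1 : j1 < c.1 ℓ i := by omega
       rw [entOf, if_pos hj1, entOf, if_pos hcell]
       refine Finset.card_le_card (fun k hk => ?_)
       have hk' := Finset.mem_filter.mp hk
       exact Finset.mem_filter.mpr ⟨hk'.1, by omega⟩
     col_strict' := by
       intro i1 i2 j hi hcell
       rw [← YoungDiagram.mem_cells, mem_toYD] at hcell
       dsimp only at hcell
       have hanti : Antitone (c.1 ℓ) := antitone_nat_of_succ_le (sc_anti c ℓ)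
       have hcell1 : j < c.1 ℓ i1 := lt_of_lt_of_le hcell (hanti (le_of_lt hi))
       set e1 := entOf c.1 ℓ i1 j with he1
       have he1l : e1 ≤ ℓ := entOf_le c hcell1
       have hsub : Finset.range (e1+1) ⊆
           (Finset.range (ℓ+1)).filter (fun k => c.1 k i2 ≤ j) := by
         intro k hk
         have hk' : k ≤ e1 := by
           have := Finset.mem_range.mp hk; omega
         refine Finset.mem_filter.mpr ⟨Finset.mem_range.mpr (by omega), ?_⟩
         cases k with
         | zero => rw [c.2.1.1]; exact Nat.zero_le j
         | succ k' =>
           have h1 : c.1 (k'+1) i2 ≤ c.1 (k'+1) (i1+1) := by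
             have : Antitone (c.1 (k'+1)) := antitone_nat_of_succ_le (sc_anti c (k'+1))
             exact this hi
           have h2 : c.1 (k'+1) (i1+1) ≤ c.1 k' i1 := (c.2.1.2 k').ir i1
           have h3 : c.1 k' i1 ≤ j :=
             (entOf_char c hcell1 k' (by omega)).mpr (by omega)
           omega
       have hcard := Finset.card_le_card hsub
       rw [Finset.card_range] at hcard
       rw [entOf, if_pos hcell]
       omega
     zeros' := by
       intro i j h
       rw [← YoungDiagram.mem_cells, mem_toYD] at h
       dsimp only at h
       exact if_neg h }⟩

lemma chainTab_fst (c : SC ℓ) :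
    (chainTab c).1 = toYD (c.1 ℓ) (sc_anti c ℓ) ℓ (sc_vanish c ℓ ℓ le_rfl) := rfl

lemma chainTab_ent (c : SC ℓ) : ((chainTab c).2 : ℕ → ℕ → ℕ) = entOf c.1 ℓ := rfl

/-- the inverse: counting entries recovers the chain. -/
def untab (T : Σ d : YoungDiagram, SemistandardYoungTableau d) : ℕ → Seq := fun k i =>
  ((Finset.range (T.1.rowLen i)).filter (fun j => T.2 i j ≤ k)).card

lemma untab_chainTab (c : SC ℓ) : untab (chainTab c) = c.1 := by
  funext k i
  show (Finset.filter (fun j => entOf c.1 ℓ i j ≤ k)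
      (Finset.range ((chainTab c).1.rowLen i))).card = c.1 k i
  have hrl : (chainTab c).1.rowLen i = c.1 ℓ i := by rw [chainTab_fst]; exact toYD_rowLen i
  rw [hrl]
  by_cases hkℓ : k ≤ ℓ
  · have hset : ((Finset.range (c.1 ℓ i)).filter (fun j => entOf c.1 ℓ i j ≤ k))
        = Finset.range (c.1 k i) := by
      ext j
      simp only [Finset.mem_filter, Finset.mem_range]
      constructor
      · rintro ⟨hj, hent⟩
        by_contra hc
        have := (entOf_char c hj k hkℓ).mp (by omega)
        omega
      · intro hj
        have hjℓ : j < c.1 ℓ i := lt_of_lt_of_le hj (sc_le_top c k i)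
        refine ⟨hjℓ, ?_⟩
        have := (entOf_char c hjℓ k hkℓ)
        omega
    rw [hset, Finset.card_range]
  · have hstab : c.1 k i = c.1 ℓ i := by rw [c.2.2 k (by omega)]
    have hset : ((Finset.range (c.1 ℓ i)).filter (fun j => entOf c.1 ℓ i j ≤ k))
        = Finset.range (c.1 ℓ i) := by
      apply Finset.filter_true_of_mem
      intro j hj
      have hjℓ : j < c.1 ℓ i := Finset.mem_range.mp hj
      have := entOf_le c hjℓ
      omega
    rw [hset, Finset.card_range, hstab]

lemma chainTab_injective : Function.Injective (chainTab (ℓ := ℓ)) := by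
  intro c c' h
  apply Subtype.ext
  rw [← untab_chainTab c, ← untab_chainTab c', h]

end RSKP

namespace RSKP

lemma sigma_tab_ext {d d' : YoungDiagram} (T : SemistandardYoungTableau d)
    (T' : SemistandardYoungTableau d') (h : d = d') (h2 : ∀ i j, T i j = T' i j) :
    (⟨d, T⟩ : Σ d, SemistandardYoungTableau d) = ⟨d', T'⟩ := by
  subst h
  exact congrArg (Sigma.mk d) (SemistandardYoungTableau.ext h2)

variable {ℓ : ℕ}

/-- tableaux with positive entries bounded by `ℓ`. -/
def TabOK (ℓ : ℕ) (T : Σ d : YoungDiagram, SemistandardYoungTableau d) : Prop :=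
  ∀ cc ∈ T.1.cells, 0 < T.2 cc.1 cc.2 ∧ T.2 cc.1 cc.2 ≤ ℓ

lemma chainTab_TabOK (c : SC ℓ) : TabOK ℓ (chainTab c) := by
  intro cc hcc
  rw [chainTab_fst, mem_toYD] at hcc
  exact ⟨entOf_pos c hcc, entOf_le c hcc⟩

lemma untab_jchar (T : Σ d : YoungDiagram, SemistandardYoungTableau d) (i k : ℕ) :
    ∀ j < T.1.rowLen i, (T.2 i j ≤ k ↔ j < untab T k i) := by
  intro j hj
  exact down_count (P := fun j => T.2 i j ≤ k)
    (fun a b hab hb hPb => le_trans (T.2.row_weak_of_le hab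
      (YoungDiagram.mem_iff_lt_rowLen.mpr hb)) hPb) j hj

lemma untab_le_rowLen (T : Σ d : YoungDiagram, SemistandardYoungTableau d) (k i : ℕ) :
    untab T k i ≤ T.1.rowLen i := by
  rw [untab]
  exact le_trans (Finset.card_filter_le _ _) (le_of_eq (Finset.card_range _))

lemma untab_top (T : Σ d : YoungDiagram, SemistandardYoungTableau d) (hT : TabOK ℓ T)
    {k : ℕ} (hk : ℓ ≤ k) (i : ℕ) : untab T k i = T.1.rowLen i := by
  rw [untab]
  rw [Finset.filter_true_of_mem, Finset.card_range]
  intro j hj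
  have hcell : (i, j) ∈ T.1.cells := by
    rw [YoungDiagram.mem_cells, YoungDiagram.mem_iff_lt_rowLen]
    exact Finset.mem_range.mp hj
  exact le_trans (hT (i, j) hcell).2 hk

/-- every tableau with positive entries `≤ ℓ` arises from a stabilized chain. -/
lemma chainTab_surj (T : Σ d : YoungDiagram, SemistandardYoungTableau d) (hT : TabOK ℓ T) :
    ∃ c : SC ℓ, chainTab c = T := by
  have hzero : untab T 0 = zS := by
    funext i
    rw [untab]
    rw [Finset.filter_false_of_mem, Finset.card_empty]
    · rfl
    · intro j hj
      have hcell : (i, j) ∈ T.1.cells := by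
        rw [YoungDiagram.mem_cells, YoungDiagram.mem_iff_lt_rowLen]
        exact Finset.mem_range.mp hj
      have h1 : 0 < T.2 i j := (hT (i, j) hcell).1
      omega
  have hHS : ∀ k, HS (untab T k) (untab T (k+1)) := by
    intro k
    intro i
    constructor
    · refine Finset.card_le_card (fun j hj => ?_)
      have hj' := Finset.mem_filter.mp hj
      exact Finset.mem_filter.mpr ⟨hj'.1, by omega⟩
    · refine nat_le_of_lt_imp (fun j hj => ?_)
      have hjr : j < T.1.rowLen (i+1) := lt_of_lt_of_le hj (untab_le_rowLen T (k+1) (i+1))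
      have h1 : T.2 (i+1) j ≤ k + 1 := (untab_jchar T (i+1) (k+1) j hjr).mpr hj
      have hcell : ((i:ℕ)+1, j) ∈ T.1 := YoungDiagram.mem_iff_lt_rowLen.mpr hjr
      have h2 : T.2 i j < T.2 (i+1) j := T.2.col_strict (Nat.lt_succ_self i) hcell
      have hjr' : j < T.1.rowLen i := lt_of_lt_of_le hjr (T.1.rowLen_anti i (i+1) (Nat.le_succ i))
      exact (untab_jchar T i k j hjr').mp (by omega)
  have hstab : ∀ j, ℓ ≤ j → untab T j = untab T ℓ := by
    intro j hj
    funext i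
    rw [untab_top T hT hj, untab_top T hT le_rfl]
  set c : SC ℓ := ⟨untab T, ⟨hzero, hHS⟩, hstab⟩ with hc
  refine ⟨c, ?_⟩
  obtain ⟨d, Tb⟩ := T
  have hsh : (chainTab c).1 = d := by
    rw [chainTab_fst]
    refine YD_rowLen_inj (fun i => ?_)
    rw [toYD_rowLen]
    exact untab_top (⟨d, Tb⟩ : Σ d, SemistandardYoungTableau d) hT le_rfl i
  refine sigma_tab_ext _ _ hsh (fun i j => ?_)
  show entOf c.1 ℓ i j = Tb i j
  by_cases hcell : (i, j) ∈ d
  · have hjr : j < d.rowLen i := YoungDiagram.mem_iff_lt_rowLen.mp hcell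
    have htop : c.1 ℓ i = d.rowLen i := untab_top (⟨d, Tb⟩ : Σ d, _) hT le_rfl i
    have hcond : j < c.1 ℓ i := by omega
    rw [entOf, if_pos hcond]
    have hTb : Tb i j ≤ ℓ := (hT (i, j) (YoungDiagram.mem_cells _ |>.mpr hcell)).2
    have hset : (Finset.range (ℓ+1)).filter (fun k => c.1 k i ≤ j) = Finset.range (Tb i j) := by
      ext k
      simp only [Finset.mem_filter, Finset.mem_range]
      constructor
      · rintro ⟨hk, hle⟩
        by_contra hcon
        have hTk : Tb i j ≤ k := by omega
        have h5 : j < untab (⟨d, Tb⟩ : Σ d, SemistandardYoungTableau d) k i :=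
          (untab_jchar (⟨d, Tb⟩ : Σ d, SemistandardYoungTableau d) i k j hjr).mp hTk
        have hb : c.1 k i = untab (⟨d, Tb⟩ : Σ d, SemistandardYoungTableau d) k i := rfl
        omega
      · intro hk
        refine ⟨by omega, ?_⟩
        have hnotlt : ¬ (j < untab (⟨d, Tb⟩ : Σ d, SemistandardYoungTableau d) k i) := by
          intro hlt
          have h6 : Tb i j ≤ k :=
            (untab_jchar (⟨d, Tb⟩ : Σ d, SemistandardYoungTableau d) i k j hjr).mpr hlt
          omega
        have hb : c.1 k i = untab (⟨d, Tb⟩ : Σ d, SemistandardYoungTableau d) k i := rfl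
        omega
    rw [hset, Finset.card_range]
  · have hjr : ¬ j < d.rowLen i := fun h => hcell (YoungDiagram.mem_iff_lt_rowLen.mpr h)
    have htop : c.1 ℓ i = d.rowLen i := untab_top (⟨d, Tb⟩ : Σ d, _) hT le_rfl i
    rw [entOf, if_neg (by omega), Tb.zeros hcell]

end RSKP

namespace RSKP

variable {ℓ : ℕ}

lemma cells_card {x : Seq} {hx : ∀ k, x (k+1) ≤ x k} {N : ℕ} {hN : x N = 0}
    (p : ℕ × ℕ → Prop) [DecidablePred p] :
    ((toYD x hx N hN).cells.filter p).card
      = ∑ i ∈ Finset.range N, ((Finset.range (x i)).filter (fun j => p (i, j))).card := by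
  have hanti : Antitone x := antitone_nat_of_succ_le hx
  rw [Finset.card_eq_sum_card_fiberwise (f := Prod.fst) (t := Finset.range N)
    (fun cc hcc => by
      have h1 : cc.2 < x cc.1 := mem_toYD.mp (Finset.mem_filter.mp hcc).1
      refine Finset.mem_range.mpr ?_
      by_contra hc
      have : x cc.1 ≤ x N := hanti (by omega)
      omega)]
  refine Finset.sum_congr rfl (fun i _ => ?_)
  refine Finset.card_bij' (fun cc _ => cc.2) (fun j _ => (i, j)) ?_ ?_ ?_ ?_
  · intro cc hcc
    obtain ⟨hcc1, hcc2⟩ := Finset.mem_filter.mp hcc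
    obtain ⟨hcc3, hcc4⟩ := Finset.mem_filter.mp hcc1
    have h1 : cc.2 < x cc.1 := mem_toYD.mp hcc3
    refine Finset.mem_filter.mpr ⟨Finset.mem_range.mpr
      (lt_of_lt_of_le h1 (le_of_eq (by rw [hcc2]))), ?_⟩
    have he : ((i : ℕ), cc.2) = cc := by rw [← hcc2]
    rw [he]
    exact hcc4
  · intro j hj
    obtain ⟨hj1, hj2⟩ := Finset.mem_filter.mp hj
    refine Finset.mem_filter.mpr ⟨Finset.mem_filter.mpr ⟨mem_toYD.mpr ?_, hj2⟩, rfl⟩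
    exact Finset.mem_range.mp hj1
  · intro cc hcc
    obtain ⟨hcc1, hcc2⟩ := Finset.mem_filter.mp hcc
    rw [← hcc2]
  · intro j _
    rfl

lemma chainTab_count (c : SC ℓ) (k : ℕ) :
    ((chainTab c).1.cells.filter
        (fun cc => ((chainTab c).2 : ℕ → ℕ → ℕ) cc.1 cc.2 = k+1)).card
      + sz (c.1 k) ℓ = sz (c.1 (k+1)) ℓ := by
  have hrow : ∀ i, ((Finset.range (c.1 ℓ i)).filter (fun j => entOf c.1 ℓ i j = k+1)).card
      + c.1 k i = c.1 (k+1) i := by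
    intro i
    by_cases hkℓ : k + 1 ≤ ℓ
    · have hset : (Finset.range (c.1 ℓ i)).filter (fun j => entOf c.1 ℓ i j = k+1)
          = Finset.Ico (c.1 k i) (c.1 (k+1) i) := by
        ext j
        simp only [Finset.mem_filter, Finset.mem_range, Finset.mem_Ico]
        constructor
        · rintro ⟨hj, hent⟩
          have h1 := (entOf_char c hj k (by omega))
          have h2 := (entOf_char c hj (k+1) hkℓ)
          omega
        · rintro ⟨h1, h2⟩
          have hj : j < c.1 ℓ i := lt_of_lt_of_le h2 (sc_le_top c (k+1) i)
          have h3 := (entOf_char c hj k (by omega))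
          have h4 := (entOf_char c hj (k+1) hkℓ)
          refine ⟨hj, by omega⟩
      rw [hset, Nat.card_Ico]
      have hmono : c.1 k i ≤ c.1 (k+1) i := sc_mono c i (Nat.le_succ k)
      omega
    · have hset : (Finset.range (c.1 ℓ i)).filter (fun j => entOf c.1 ℓ i j = k+1)
          = ∅ := by
        apply Finset.filter_false_of_mem
        intro j hj
        have := entOf_le c (Finset.mem_range.mp hj)
        omega
      rw [hset, Finset.card_empty]
      have h1 : c.1 k i = c.1 ℓ i := by rw [c.2.2 k (by omega)]
      have h2 : c.1 (k+1) i = c.1 ℓ i := by rw [c.2.2 (k+1) (by omega)]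
      omega
  have hcc : ((chainTab c).1.cells.filter
        (fun cc => ((chainTab c).2 : ℕ → ℕ → ℕ) cc.1 cc.2 = k+1)).card
      = ∑ i ∈ Finset.range ℓ, ((Finset.range (c.1 ℓ i)).filter
          (fun j => entOf c.1 ℓ i j = k+1)).card := by
    exact cells_card (hx := sc_anti c ℓ) (hN := sc_vanish c ℓ ℓ le_rfl)
      (p := fun cc => entOf c.1 ℓ cc.1 cc.2 = k+1)
  rw [hcc, sz, sz, ← Finset.sum_add_distrib]
  exact Finset.sum_congr rfl (fun i _ => hrow i)

/-- the zero chain gives the empty tableau, and conversely. -/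
def zSC : SC ℓ := ⟨fun _ => zS, ⟨rfl, fun _ => HS_zS_zS⟩, fun _ _ => rfl⟩

lemma chainTab_zSC : (chainTab (zSC (ℓ := ℓ))).1 = ⊥ := by
  rw [chainTab_fst]
  exact toYD_bot

lemma chainTab_bot (c : SC ℓ) (h : (chainTab c).1 = ⊥) : c = zSC := by
  apply Subtype.ext
  funext k i
  have h1 : c.1 k i = untab (chainTab c) k i := by rw [untab_chainTab]
  have h2 : (chainTab c).1.rowLen i = 0 := by rw [h, rowLen_bot]
  rw [h1, untab, h2]
  simp [zSC, zS]

end RSKP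


-- ===================== polynomial layer =====================
namespace RSKP

open UniqueFactorizationMonoid

variable {F : Type} [Field F] [DecidableEq F]

instance : DecidableEq (PhiSet F) :=
  inferInstanceAs (DecidableEq
    {f : Polynomial F // f.Monic ∧ Irreducible f ∧ Polynomial.eval 0 f ≠ 0})

noncomputable def fromExp (e : PhiSet F →₀ ℕ) : Polynomial F := e.prod fun f n => f.1 ^ n

lemma fromExp_monic (e : PhiSet F →₀ ℕ) : (fromExp e).Monic :=
  Polynomial.monic_prod_of_monic _ _ (fun f _ => f.2.1.pow _)

omit [DecidableEq F] in
lemma fromExp_eval0 (e : PhiSet F →₀ ℕ) : Polynomial.eval 0 (fromExp e) ≠ 0 := by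
  rw [fromExp, Finsupp.prod, Polynomial.eval_prod]
  refine Finset.prod_ne_zero_iff.mpr (fun f _ => ?_)
  rw [Polynomial.eval_pow]
  exact pow_ne_zero _ f.2.2.2

lemma fromExp_ne_zero (e : PhiSet F →₀ ℕ) : fromExp e ≠ 0 :=
  (fromExp_monic e).ne_zero

omit [DecidableEq F] in
lemma fromExp_natDegree (e : PhiSet F →₀ ℕ) :
    (fromExp e).natDegree = e.sum fun f n => n * f.1.natDegree := by
  rw [fromExp, Finsupp.prod, Polynomial.natDegree_prod]
  · rw [Finsupp.sum]
    exact Finset.sum_congr rfl (fun f _ => by rw [Polynomial.natDegree_pow])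
  · exact fun f _ => pow_ne_zero _ f.2.1.ne_zero

lemma nf_fromExp (e : PhiSet F →₀ ℕ) :
    normalizedFactors (fromExp e) = e.sum fun f n => n • ({f.1} : Multiset (Polynomial F)) := by
  induction e using Finsupp.induction with
  | zero =>
    rw [show fromExp (0 : PhiSet F →₀ ℕ) = 1 from Finsupp.prod_zero_index]
    simp [normalizedFactors_one]
  | single_add f n e hfe hn ih =>
    have hmul : fromExp (Finsupp.single f n + e) = f.1 ^ n * fromExp e := by
      rw [fromExp,
        Finsupp.prod_add_index' (h := fun (f : PhiSet F) n => (f.1 : Polynomial F) ^ n)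
          (fun g => pow_zero g.1) (fun g m m' => pow_add g.1 m m'),
        Finsupp.prod_single_index (h := fun (f : PhiSet F) n => (f.1 : Polynomial F) ^ n)
          (pow_zero f.1)]
      rfl
    rw [hmul, normalizedFactors_mul (pow_ne_zero _ f.2.1.ne_zero) (fromExp_ne_zero e),
      f.2.2.1.normalizedFactors_pow, ih, f.2.1.normalize_eq_self,
      Finsupp.sum_add_index' (h := fun (f : PhiSet F) n => n • ({f.1} : Multiset (Polynomial F)))
        (fun g => zero_smul ℕ _) (fun g m m' => add_smul m m' _),
      Finsupp.sum_single_index (h := fun (f : PhiSet F) n => n • ({f.1} : Multiset (Polynomial F)))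
        (zero_smul ℕ _), Multiset.nsmul_singleton]

lemma count_fromExp (e : PhiSet F →₀ ℕ) (g : PhiSet F) :
    (normalizedFactors (fromExp e)).count g.1 = e g := by
  rw [nf_fromExp, Finsupp.sum, Multiset.count_sum']
  have hterm : ∀ f ∈ e.support, Multiset.count g.1 (e f • ({f.1} : Multiset (Polynomial F)))
      = if f = g then e g else 0 := by
    intro f _
    rw [Multiset.count_nsmul, Multiset.count_singleton]
    by_cases h : f = g
    · subst h; simp
    · have : ¬ (g.1 = f.1) := fun hh => h (Subtype.ext hh.symm)
      simp [h, this]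
  rw [Finset.sum_congr rfl hterm, Finset.sum_ite_eq' e.support g (fun _ => e g)]
  by_cases hg : g ∈ e.support
  · simp [hg]
  · simp [hg, Finsupp.notMem_support_iff.mp hg]

lemma fromExp_injective : Function.Injective (fromExp (F := F)) := by
  intro e e' h
  ext g
  rw [← count_fromExp e g, ← count_fromExp e' g, h]

lemma fromExp_surjective (p : Polynomial F) (hm : p.Monic) (h0 : Polynomial.eval 0 p ≠ 0) :
    ∃ e : PhiSet F →₀ ℕ, fromExp e = p := by
  have hp0 : p ≠ 0 := hm.ne_zero
  have hfin : (Function.support fun f : PhiSet F =>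
      (normalizedFactors p).count f.1).Finite := by
    apply Set.Finite.subset (Set.Finite.preimage (Set.injOn_of_injective Subtype.val_injective)
      (normalizedFactors p).toFinset.finite_toSet)
    intro f hf
    have hf : (normalizedFactors p).count f.1 ≠ 0 := hf
    simp only [Set.mem_preimage, Finset.mem_coe, Multiset.mem_toFinset]
    exact Multiset.count_pos.mp (Nat.pos_of_ne_zero hf)
  set e : PhiSet F →₀ ℕ := Finsupp.ofSupportFinite _ hfin with he
  have hesupp : ∀ f : PhiSet F, e f = (normalizedFactors p).count f.1 := fun f => rfl
  refine ⟨e, ?_⟩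
  -- each normalized factor is monic, irreducible, with nonzero constant term
  have hfact : ∀ a ∈ (normalizedFactors p).toFinset,
      a.Monic ∧ Irreducible a ∧ Polynomial.eval 0 a ≠ 0 := by
    intro a ha
    rw [Multiset.mem_toFinset] at ha
    have hirr : Irreducible a := irreducible_of_normalized_factor a ha
    have hmon : a.Monic := by
      have h1 : normalize a = a := normalize_normalized_factor a ha
      have h2 : (normalize a).Monic := Polynomial.monic_normalize hirr.ne_zero
      rwa [h1] at h2
    refine ⟨hmon, hirr, ?_⟩
    obtain ⟨c, hc⟩ := dvd_of_mem_normalizedFactors ha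
    intro hev
    apply h0
    rw [hc, Polynomial.eval_mul, hev, zero_mul]
  -- p = product over its normalized factors
  have hprod : ((normalizedFactors p).toFinset.prod
      fun a => a ^ (normalizedFactors p).count a) = p := by
    rw [← Finset.prod_multiset_count]
    have hassoc : Associated ((normalizedFactors p).prod) p := prod_normalizedFactors hp0
    refine Polynomial.eq_of_monic_of_associated ?_ hm hassoc
    exact Polynomial.monic_multiset_prod_of_monic _ _
      (fun a ha => Polynomial.monic_normalize (irreducible_of_factor a ha).ne_zero)
  rw [← hprod, fromExp, Finsupp.prod]
  refine Finset.prod_bij (fun f _ => f.1) ?_ ?_ ?_ ?_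
  · intro f hf
    rw [Multiset.mem_toFinset, ← Multiset.count_pos, ← hesupp f]
    exact Nat.pos_of_ne_zero (Finsupp.mem_support_iff.mp hf)
  · intro f _ g _ hfg
    exact Subtype.ext hfg
  · intro a ha
    refine ⟨⟨a, hfact a ha⟩, ?_, rfl⟩
    refine Finsupp.mem_support_iff.mpr ?_
    show (normalizedFactors p).count a ≠ 0
    have hpos : 0 < (normalizedFactors p).count a := by
      rwa [Multiset.mem_toFinset, ← Multiset.count_pos] at ha
    simpa using hpos.ne'
  · intro f _
    rw [hesupp]

end RSKP

namespace RSKP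

variable {ℓ : ℕ}

def scQ (A : Matrix (Fin ℓ) (Fin ℓ) ℕ) : SC ℓ := ⟨(rsk A).1.1, (rsk A).2.1, (rsk A).2.2.2.1⟩
def scR (A : Matrix (Fin ℓ) (Fin ℓ) ℕ) : SC ℓ := ⟨(rsk A).1.2, (rsk A).2.2.1, (rsk A).2.2.2.2.1⟩

/-- the full RSK map from matrices to pairs of tableaux. -/
def tabPair (A : Matrix (Fin ℓ) (Fin ℓ) ℕ) :
    (Σ d : YoungDiagram, SemistandardYoungTableau d) ×
    (Σ d : YoungDiagram, SemistandardYoungTableau d) :=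
  (chainTab (scQ A), chainTab (scR A))

lemma tabPair_shape_eq (A : Matrix (Fin ℓ) (Fin ℓ) ℕ) : (tabPair A).1.1 = (tabPair A).2.1 := by
  show (chainTab (scQ A)).1 = (chainTab (scR A)).1
  rw [chainTab_fst, chainTab_fst]
  refine YD_rowLen_inj (fun i => ?_)
  rw [toYD_rowLen, toYD_rowLen]
  exact congrFun ((rsk A).2.2.2.2.2) i

lemma tabPair_TabOK1 (A : Matrix (Fin ℓ) (Fin ℓ) ℕ) : TabOK ℓ (tabPair A).1 :=
  chainTab_TabOK _

lemma tabPair_TabOK2 (A : Matrix (Fin ℓ) (Fin ℓ) ℕ) : TabOK ℓ (tabPair A).2 :=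
  chainTab_TabOK _

lemma tabPair_count1 (A : Matrix (Fin ℓ) (Fin ℓ) ℕ) (k : ℕ) :
    ((tabPair A).1.1.cells.filter
        (fun cc => ((tabPair A).1.2 : ℕ → ℕ → ℕ) cc.1 cc.2 = k+1)).card
      = ∑ i' ∈ Finset.range ℓ, Ae A i' k := by
  have h1 := chainTab_count (scQ A) k
  have h2 := rsk_colsum A k
  have e1 : (scQ A).1 = (rsk A).1.1 := rfl
  rw [e1] at h1
  show ((chainTab (scQ A)).1.cells.filter
        (fun cc => ((chainTab (scQ A)).2 : ℕ → ℕ → ℕ) cc.1 cc.2 = k+1)).card = _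
  omega

lemma tabPair_count2 (A : Matrix (Fin ℓ) (Fin ℓ) ℕ) (k : ℕ) :
    ((tabPair A).2.1.cells.filter
        (fun cc => ((tabPair A).2.2 : ℕ → ℕ → ℕ) cc.1 cc.2 = k+1)).card
      = ∑ j ∈ Finset.range ℓ, Ae A k j := by
  have h1 := chainTab_count (scR A) k
  have e1 : (scR A).1 = (rsk A).1.2 := rfl
  rw [e1] at h1
  show ((chainTab (scR A)).1.cells.filter
        (fun cc => ((chainTab (scR A)).2 : ℕ → ℕ → ℕ) cc.1 cc.2 = k+1)).card = _
  by_cases hk : k < ℓ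
  · have h2 := rsk_rowsum A k hk
    omega
  · have hstab1 : (rsk A).1.2 (k+1) = (rsk A).1.2 ℓ := (rsk A).2.2.2.2.1 (k+1) (by omega)
    have hstab2 : (rsk A).1.2 k = (rsk A).1.2 ℓ := (rsk A).2.2.2.2.1 k (by omega)
    rw [hstab1, hstab2] at h1
    have hz : ∀ j ∈ Finset.range ℓ, Ae A k j = 0 := by
      intro j _
      simp only [Ae]
      rw [dif_neg (by omega)]
    rw [Finset.sum_congr rfl hz, Finset.sum_const_zero]
    omega

lemma tabPair_injective : Function.Injective (tabPair (ℓ := ℓ)) := by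
  intro A A' h
  have h1 : chainTab (scQ A) = chainTab (scQ A') := congrArg Prod.fst h
  have h2 : chainTab (scR A) = chainTab (scR A') := congrArg Prod.snd h
  have h3 := chainTab_injective h1
  have h4 := chainTab_injective h2
  apply rsk_bijective.1
  apply Subtype.ext
  apply Prod.ext
  · exact congrArg Subtype.val h3
  · exact congrArg Subtype.val h4

lemma tabPair_surjective (TP TQ : Σ d : YoungDiagram, SemistandardYoungTableau d)
    (hP : TabOK ℓ TP) (hQ : TabOK ℓ TQ) (hsh : TP.1 = TQ.1) :
    ∃ A : Matrix (Fin ℓ) (Fin ℓ) ℕ, tabPair A = (TP, TQ) := by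
  obtain ⟨cP, hcP⟩ := chainTab_surj TP hP
  obtain ⟨cQ, hcQ⟩ := chainTab_surj TQ hQ
  have htop : cP.1 ℓ = cQ.1 ℓ := by
    funext i
    have e1 : cP.1 ℓ i = untab (chainTab cP) ℓ i := by rw [untab_chainTab]
    have e2 : cQ.1 ℓ i = untab (chainTab cQ) ℓ i := by rw [untab_chainTab]
    rw [e1, e2, hcP, hcQ, untab_top TP hP le_rfl, untab_top TQ hQ le_rfl, hsh]
  obtain ⟨A, hA⟩ := rsk_bijective.2
    ⟨(cP.1, cQ.1), cP.2.1, cQ.2.1, cP.2.2, cQ.2.2, htop⟩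
  refine ⟨A, ?_⟩
  have hQA : scQ A = cP := by
    apply Subtype.ext
    show (rsk A).1.1 = cP.1
    rw [hA]
  have hRA : scR A = cQ := by
    apply Subtype.ext
    show (rsk A).1.2 = cQ.1
    rw [hA]
  show (chainTab (scQ A), chainTab (scR A)) = (TP, TQ)
  rw [hQA, hRA, hcP, hcQ]

lemma tabPair_zero_shape : ((tabPair (0 : Matrix (Fin ℓ) (Fin ℓ) ℕ)).1.1 : YoungDiagram) = ⊥ := by
  have hAe0 : Ae (0 : Matrix (Fin ℓ) (Fin ℓ) ℕ) = fun _ _ => 0 := by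
    funext i j
    simp only [Ae]
    split <;> simp
  have hgrid : ∀ i, grid (fun _ _ => (0:ℕ)) i = fun _ => zS := by
    intro i
    induction i with
    | zero => rfl
    | succ i ih =>
      rw [grid_succ, nrow_zero_row (grid_chain _ i) (fun _ => rfl), ih]
  have hscQ : scQ (0 : Matrix (Fin ℓ) (Fin ℓ) ℕ) = zSC := by
    apply Subtype.ext
    show (rsk (0 : Matrix (Fin ℓ) (Fin ℓ) ℕ)).1.1 = _
    rw [rsk_q, hAe0]
    funext j
    rw [hgrid ℓ]
    rfl
  show (chainTab (scQ (0 : Matrix (Fin ℓ) (Fin ℓ) ℕ))).1 = ⊥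
  rw [hscQ, chainTab_zSC]

lemma tabPair_shape_bot (A : Matrix (Fin ℓ) (Fin ℓ) ℕ) (h : (tabPair A).1.1 = ⊥) : A = 0 := by
  funext i j
  have hc := tabPair_count1 A j.1
  have h0 : (tabPair A).1.1.cells.card = 0 := by
    rw [h, YoungDiagram.cells_bot, Finset.card_empty]
  have hle := Finset.card_filter_le ((tabPair A).1.1.cells)
    (fun cc => ((tabPair A).1.2 : ℕ → ℕ → ℕ) cc.1 cc.2 = j.1+1)
  have hsum0 : ∑ i' ∈ Finset.range ℓ, Ae A i' j.1 = 0 := by omega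
  have hall := Finset.sum_eq_zero_iff.mp hsum0
  have h2 := hall i.1 (Finset.mem_range.mpr i.2)
  simp only [Ae, dif_pos (And.intro i.2 j.2)] at h2
  simpa using h2

end RSKP

-- ===================== final assembly =====================
namespace RSKP

variable {F : Type} [Field F] [DecidableEq F]

noncomputable def toExp (p : Polynomial F) : PhiSet F →₀ ℕ :=
  if h : p.Monic ∧ Polynomial.eval 0 p ≠ 0 then (fromExp_surjective p h.1 h.2).choose else 0

lemma fromExp_toExp {p : Polynomial F} (h1 : p.Monic) (h2 : Polynomial.eval 0 p ≠ 0) :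
    fromExp (toExp p) = p := by
  rw [toExp, dif_pos (And.intro h1 h2)]
  exact (fromExp_surjective p h1 h2).choose_spec

lemma toExp_fromExp (e : PhiSet F →₀ ℕ) : toExp (fromExp e) = e :=
  fromExp_injective (by rw [fromExp_toExp (fromExp_monic e) (fromExp_eval0 e)])

omit [DecidableEq F] in
lemma deg_sum (e : PhiSet F →₀ ℕ) (s : Finset (PhiSet F)) (hs : e.support ⊆ s) :
    ∑ f ∈ s, f.1.natDegree * e f = (fromExp e).natDegree := by
  rw [fromExp_natDegree, Finsupp.sum]
  rw [← Finset.sum_subset hs (fun f _ hf => by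
    rw [Finsupp.notMem_support_iff.mp hf, mul_zero])]
  exact Finset.sum_congr rfl (fun f _ => mul_comm _ _)

variable {L : ℕ}

omit [DecidableEq F] in
lemma Ae_zero (i j : ℕ) : Ae (0 : Matrix (Fin L) (Fin L) ℕ) i j = 0 := by
  simp only [Ae]
  split <;> simp

omit [DecidableEq F] in
lemma Ae_lt {A : Matrix (Fin L) (Fin L) ℕ} {i j : ℕ} (hi : i < L) (hj : j < L) :
    Ae A i j = A ⟨i, hi⟩ ⟨j, hj⟩ := by
  simp [Ae, hi, hj]

omit [DecidableEq F] in
lemma Ae_ge {A : Matrix (Fin L) (Fin L) ℕ} {i j : ℕ} (h : L ≤ i ∨ L ≤ j) :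
    Ae A i j = 0 := by
  simp only [Ae]
  rw [dif_neg (by omega)]

omit [DecidableEq F] in
/-- weight computation, `P`-side. -/
lemma finsum_wt1 (A : PhiSet F → Matrix (Fin L) (Fin L) ℕ) (s : Finset (PhiSet F))
    (hs : ∀ f, f ∉ s → A f = 0) (k : ℕ) :
    (∑ᶠ f : PhiSet F, f.1.natDegree * (((tabPair (A f)).1.1).cells.filter
      (fun cc => ((tabPair (A f)).1.2 : ℕ → ℕ → ℕ) cc.1 cc.2 = k+1)).card)
    = ∑ i' ∈ Finset.range L, ∑ f ∈ s, f.1.natDegree * Ae (A f) i' k := by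
  have hsupp : (Function.support fun f : PhiSet F => f.1.natDegree *
      (((tabPair (A f)).1.1).cells.filter
      (fun cc => ((tabPair (A f)).1.2 : ℕ → ℕ → ℕ) cc.1 cc.2 = k+1)).card) ⊆ ↑s := by
    intro f hf
    simp only [Function.mem_support, ne_eq] at hf
    by_contra hfs
    apply hf
    have hA := hs f (by simpa using hfs)
    rw [hA, tabPair_count1,
      Finset.sum_congr rfl (fun i' _ => Ae_zero i' k), Finset.sum_const_zero, mul_zero]
  rw [finsum_eq_sum_of_support_subset _ hsupp,
    Finset.sum_congr rfl (fun f _ => by rw [tabPair_count1, Finset.mul_sum])]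
  exact Finset.sum_comm

omit [DecidableEq F] in
/-- weight computation, `Q`-side. -/
lemma finsum_wt2 (A : PhiSet F → Matrix (Fin L) (Fin L) ℕ) (s : Finset (PhiSet F))
    (hs : ∀ f, f ∉ s → A f = 0) (k : ℕ) :
    (∑ᶠ f : PhiSet F, f.1.natDegree * (((tabPair (A f)).2.1).cells.filter
      (fun cc => ((tabPair (A f)).2.2 : ℕ → ℕ → ℕ) cc.1 cc.2 = k+1)).card)
    = ∑ j' ∈ Finset.range L, ∑ f ∈ s, f.1.natDegree * Ae (A f) k j' := by
  have hsupp : (Function.support fun f : PhiSet F => f.1.natDegree *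
      (((tabPair (A f)).2.1).cells.filter
      (fun cc => ((tabPair (A f)).2.2 : ℕ → ℕ → ℕ) cc.1 cc.2 = k+1)).card) ⊆ ↑s := by
    intro f hf
    simp only [Function.mem_support, ne_eq] at hf
    by_contra hfs
    apply hf
    have hA := hs f (by simpa using hfs)
    rw [hA, tabPair_count2,
      Finset.sum_congr rfl (fun j' _ => Ae_zero k j'), Finset.sum_const_zero, mul_zero]
  rw [finsum_eq_sum_of_support_subset _ hsupp,
    Finset.sum_congr rfl (fun f _ => by rw [tabPair_count2, Finset.mul_sum])]
  exact Finset.sum_comm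

end RSKP

namespace RSKP

lemma getD_lt (μ : List ℕ) {k : ℕ} (hk : k < μ.length) : μ.getD k 0 = μ.get ⟨k, hk⟩ := by
  simp [List.getD_eq_getElem?_getD, List.getElem?_eq_getElem hk, List.get_eq_getElem]

lemma getD_ge (μ : List ℕ) {k : ℕ} (hk : μ.length ≤ k) : μ.getD k 0 = 0 := by
  simp [List.getD_eq_getElem?_getD, List.getElem?_eq_none hk]

variable {F : Type} [Field F] [DecidableEq F] {L : ℕ}

/-- exponent matrices of a polynomial matrix. -/
noncomputable def expM (a : Matrix (Fin L) (Fin L) (Polynomial F)) (f : PhiSet F) :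
    Matrix (Fin L) (Fin L) ℕ := fun i j => toExp (a i j) f

/-- the global RSK map. -/
noncomputable def Psi0 (a : Matrix (Fin L) (Fin L) (Polynomial F)) : PhiTab F × PhiTab F :=
  (fun f => (tabPair (expM a f)).1, fun f => (tabPair (expM a f)).2)

noncomputable def sSet (a : Matrix (Fin L) (Fin L) (Polynomial F)) : Finset (PhiSet F) :=
  Finset.univ.biUnion (fun ij : Fin L × Fin L => (toExp (a ij.1 ij.2)).support)

lemma expM_not_supp {a : Matrix (Fin L) (Fin L) (Polynomial F)} {f : PhiSet F}
    (hf : f ∉ sSet a) : expM a f = 0 := by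
  funext i j
  show toExp (a i j) f = 0
  by_contra h
  exact hf (Finset.mem_biUnion.mpr ⟨(i, j), Finset.mem_univ _,
    Finsupp.mem_support_iff.mpr h⟩)

lemma expM_supp_sub (a : Matrix (Fin L) (Fin L) (Polynomial F)) (i j : Fin L) :
    (toExp (a i j)).support ⊆ sSet a := fun f hf =>
  Finset.mem_biUnion.mpr ⟨(i, j), Finset.mem_univ _, hf⟩

lemma Psi0_wt1 (a : Matrix (Fin L) (Fin L) (Polynomial F))
    (hmon : ∀ i j, (a i j).Monic ∧ Polynomial.eval 0 (a i j) ≠ 0) (k : ℕ) :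
    PhiTab.wt (fun f => (tabPair (expM a f)).1) (k+1)
      = ∑ i' ∈ Finset.range L, ∑ f ∈ sSet a, f.1.natDegree * Ae (expM a f) i' k := by
  unfold PhiTab.wt
  exact finsum_wt1 (expM a) (sSet a) (fun f hf => expM_not_supp hf) k

lemma Psi0_wt2 (a : Matrix (Fin L) (Fin L) (Polynomial F))
    (hmon : ∀ i j, (a i j).Monic ∧ Polynomial.eval 0 (a i j) ≠ 0) (k : ℕ) :
    PhiTab.wt (fun f => (tabPair (expM a f)).2) (k+1)
      = ∑ j' ∈ Finset.range L, ∑ f ∈ sSet a, f.1.natDegree * Ae (expM a f) k j' := by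
  unfold PhiTab.wt
  exact finsum_wt2 (expM a) (sSet a) (fun f hf => expM_not_supp hf) k

lemma inner_deg (a : Matrix (Fin L) (Fin L) (Polynomial F))
    (hmon : ∀ i j, (a i j).Monic ∧ Polynomial.eval 0 (a i j) ≠ 0)
    {i' k : ℕ} (hi' : i' < L) (hk : k < L) :
    ∑ f ∈ sSet a, f.1.natDegree * Ae (expM a f) i' k
      = (a ⟨i', hi'⟩ ⟨k, hk⟩).natDegree := by
  rw [Finset.sum_congr rfl (fun f _ => by rw [Ae_lt hi' hk])]
  have h1 := deg_sum (toExp (a ⟨i', hi'⟩ ⟨k, hk⟩)) (sSet a) (expM_supp_sub a _ _)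
  rw [fromExp_toExp (hmon _ _).1 (hmon _ _).2] at h1
  exact h1

lemma inner_deg_zero (a : Matrix (Fin L) (Fin L) (Polynomial F))
    {i' k : ℕ} (h : L ≤ i' ∨ L ≤ k) :
    ∑ f ∈ sSet a, f.1.natDegree * Ae (expM a f) i' k = 0 := by
  rw [Finset.sum_congr rfl (fun f _ => by rw [Ae_ge h, mul_zero]), Finset.sum_const_zero]

end RSKP

namespace RSKP

variable {F : Type} [Field F] [DecidableEq F]

lemma Psi0_mem (μ : List ℕ) (a : Matrix (Fin μ.length) (Fin μ.length) (Polynomial F))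
    (ha : a ∈ Mmu F μ) :
    (Psi0 a).1.IsCS ∧ (Psi0 a).2.IsCS ∧ (∀ f, ((Psi0 a).1 f).1 = ((Psi0 a).2 f).1) ∧
      (Psi0 a).1.HasWt μ ∧ (Psi0 a).2.HasWt μ := by
  obtain ⟨hmon, hrow, hcol⟩ := ha
  have hfin : {f : PhiSet F | ((Psi0 a).1 f).1 ≠ ⊥}.Finite := by
    apply Set.Finite.subset (sSet a).finite_toSet
    intro f hf
    simp only [Set.mem_setOf_eq] at hf
    by_contra hfs
    apply hf
    show (tabPair (expM a f)).1.1 = ⊥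
    rw [expM_not_supp (by simpa using hfs)]
    exact tabPair_zero_shape
  have hsh : ∀ f, ((Psi0 a).1 f).1 = ((Psi0 a).2 f).1 := fun f => tabPair_shape_eq (expM a f)
  refine ⟨⟨hfin, fun f cc hcc => (tabPair_TabOK1 (expM a f) cc hcc).1⟩,
    ⟨?_, fun f cc hcc => (tabPair_TabOK2 (expM a f) cc hcc).1⟩, hsh, ?_, ?_⟩
  · apply Set.Finite.subset hfin
    intro f hf
    simp only [Set.mem_setOf_eq] at hf ⊢
    rw [hsh f] at *
    exact hf
  · intro k
    show PhiTab.wt (fun f => (tabPair (expM a f)).1) (k+1) = μ.getD k 0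
    rw [Psi0_wt1 a hmon k]
    by_cases hk : k < μ.length
    · rw [← Fin.sum_univ_eq_sum_range
        (fun i' => ∑ f ∈ sSet a, f.1.natDegree * Ae (expM a f) i' k) μ.length,
        Finset.sum_congr rfl (fun i _ => inner_deg a hmon i.2 hk),
        getD_lt μ hk]
      have := hcol ⟨k, hk⟩
      simpa [Fin.eta] using this
    · rw [Finset.sum_congr rfl (fun i' _ => inner_deg_zero a (Or.inr (by omega))),
        Finset.sum_const_zero, getD_ge μ (by omega)]
  · intro k
    show PhiTab.wt (fun f => (tabPair (expM a f)).2) (k+1) = μ.getD k 0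
    rw [Psi0_wt2 a hmon k]
    by_cases hk : k < μ.length
    · rw [← Fin.sum_univ_eq_sum_range
        (fun j' => ∑ f ∈ sSet a, f.1.natDegree * Ae (expM a f) k j') μ.length,
        Finset.sum_congr rfl (fun j _ => inner_deg a hmon hk j.2),
        getD_lt μ hk]
      have := hrow ⟨k, hk⟩
      simpa [Fin.eta] using this
    · rw [Finset.sum_congr rfl (fun j' _ => inner_deg_zero a (Or.inl (by omega))),
        Finset.sum_const_zero, getD_ge μ (by omega)]

end RSKP

namespace RSKP

variable {F : Type} [Field F] [DecidableEq F]

lemma Psi0_inj {L : ℕ} (a a' : Matrix (Fin L) (Fin L) (Polynomial F))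
    (hm : ∀ i j, (a i j).Monic ∧ Polynomial.eval 0 (a i j) ≠ 0)
    (hm' : ∀ i j, (a' i j).Monic ∧ Polynomial.eval 0 (a' i j) ≠ 0)
    (h : Psi0 a = Psi0 a') : a = a' := by
  have h2 : ∀ f, expM a f = expM a' f := by
    intro f
    apply tabPair_injective
    have e1 : (tabPair (expM a f)).1 = (tabPair (expM a' f)).1 :=
      congrFun (congrArg Prod.fst h) f
    have e2 : (tabPair (expM a f)).2 = (tabPair (expM a' f)).2 :=
      congrFun (congrArg Prod.snd h) f
    exact Prod.ext e1 e2
  funext i j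
  have h3 : toExp (a i j) = toExp (a' i j) := by
    apply Finsupp.ext
    intro f
    exact congrFun (congrFun (h2 f) i) j
  calc a i j = fromExp (toExp (a i j)) := (fromExp_toExp (hm i j).1 (hm i j).2).symm
  _ = fromExp (toExp (a' i j)) := by rw [h3]
  _ = a' i j := fromExp_toExp (hm' i j).1 (hm' i j).2

lemma TabOK_of_CS (μ : List ℕ) (T : PhiTab F) (hT : T.IsCS) (hTw : T.HasWt μ) (f : PhiSet F) :
    TabOK μ.length (T f) := by
  intro cc hcc
  refine ⟨hT.2 f cc hcc, ?_⟩
  by_contra hgt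
  push_neg at hgt
  set m := ((T f).2 : ℕ → ℕ → ℕ) cc.1 cc.2 with hm
  have hm1 : 1 ≤ m := hT.2 f cc hcc
  have hw := hTw (m - 1)
  rw [getD_ge μ (by omega)] at hw
  have hsupp : (Function.support fun g : PhiSet F => g.1.natDegree *
      ((T g).1.cells.filter (fun c => ((T g).2 : ℕ → ℕ → ℕ) c.1 c.2 = (m-1)+1)).card)
      ⊆ ↑(hT.1.toFinset ∪ {f}) := by
    intro g hg
    simp only [Function.mem_support, ne_eq] at hg
    simp only [Finset.coe_union, Set.mem_union, Finset.coe_singleton,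
      Set.Finite.coe_toFinset]
    left
    refine (Set.Finite.mem_toFinset _).mpr ?_
    show (T g).1 ≠ ⊥
    intro hbot
    apply hg
    have hce : (T g).1.cells = ∅ := by rw [hbot]; exact YoungDiagram.cells_bot
    rw [hce, Finset.filter_empty, Finset.card_empty, mul_zero]
  unfold PhiTab.wt at hw
  rw [finsum_eq_sum_of_support_subset _ hsupp] at hw
  have hmem : f ∈ hT.1.toFinset ∪ {f} :=
    Finset.mem_union_right _ (Finset.mem_singleton_self f)
  have hterm : 1 ≤ f.1.natDegree *
      ((T f).1.cells.filter (fun c => ((T f).2 : ℕ → ℕ → ℕ) c.1 c.2 = (m-1)+1)).card := by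
    have hd : 0 < f.1.natDegree := f.2.2.1.natDegree_pos
    have hcard : 0 < ((T f).1.cells.filter
        (fun c => ((T f).2 : ℕ → ℕ → ℕ) c.1 c.2 = (m-1)+1)).card :=
      Finset.card_pos.mpr ⟨cc, Finset.mem_filter.mpr ⟨hcc, by omega⟩⟩
    exact Nat.mul_pos hd hcard
  have hle : f.1.natDegree *
      ((T f).1.cells.filter (fun c => ((T f).2 : ℕ → ℕ → ℕ) c.1 c.2 = (m-1)+1)).card
      ≤ ∑ g ∈ hT.1.toFinset ∪ {f}, g.1.natDegree *
      ((T g).1.cells.filter (fun c => ((T g).2 : ℕ → ℕ → ℕ) c.1 c.2 = (m-1)+1)).card :=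
    Finset.single_le_sum (f := fun g : PhiSet F => g.1.natDegree *
      ((T g).1.cells.filter (fun c => ((T g).2 : ℕ → ℕ → ℕ) c.1 c.2 = (m-1)+1)).card)
      (fun g _ => Nat.zero_le _) hmem
  omega

lemma Psi0_surj (μ : List ℕ) (P Q : PhiTab F)
    (hP : P.IsCS) (hQ : Q.IsCS) (hsh : ∀ f, (P f).1 = (Q f).1)
    (hPw : P.HasWt μ) (hQw : Q.HasWt μ) :
    ∃ a : Matrix (Fin μ.length) (Fin μ.length) (Polynomial F),
      a ∈ Mmu F μ ∧ Psi0 a = (P, Q) := by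
  have hTabP := TabOK_of_CS μ P hP hPw
  have hTabQ := TabOK_of_CS μ Q hQ hQw
  let Af : PhiSet F → Matrix (Fin μ.length) (Fin μ.length) ℕ :=
    fun f => (tabPair_surjective (P f) (Q f) (hTabP f) (hTabQ f) (hsh f)).choose
  have hAf : ∀ f, tabPair (Af f) = (P f, Q f) :=
    fun f => (tabPair_surjective (P f) (Q f) (hTabP f) (hTabQ f) (hsh f)).choose_spec
  have hAbot : ∀ f, (P f).1 = ⊥ → Af f = 0 := by
    intro f hbot
    apply tabPair_shape_bot
    rw [show (tabPair (Af f)).1 = P f from congrArg Prod.fst (hAf f), hbot]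
  have hEfin : ∀ (i j : Fin μ.length), (Function.support fun f => Af f i j).Finite := by
    intro i j
    apply Set.Finite.subset hP.1
    intro f hf
    simp only [Function.mem_support, ne_eq] at hf
    simp only [Set.mem_setOf_eq]
    intro hbot
    apply hf
    rw [hAbot f hbot]
    rfl
  set E : Fin μ.length → Fin μ.length → (PhiSet F →₀ ℕ) :=
    fun i j => Finsupp.ofSupportFinite _ (hEfin i j) with hEdef
  set a : Matrix (Fin μ.length) (Fin μ.length) (Polynomial F) :=
    fun i j => fromExp (E i j) with hadef
  have hmon : ∀ i j, (a i j).Monic ∧ Polynomial.eval 0 (a i j) ≠ 0 :=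
    fun i j => ⟨fromExp_monic _, fromExp_eval0 _⟩
  have hexp : ∀ f, expM a f = Af f := by
    intro f
    funext i j
    show toExp (a i j) f = Af f i j
    rw [show a i j = fromExp (E i j) from rfl, toExp_fromExp]
    rfl
  have hPsi : Psi0 a = (P, Q) := by
    apply Prod.ext
    · funext f
      show (tabPair (expM a f)).1 = P f
      rw [hexp f]
      exact congrArg Prod.fst (hAf f)
    · funext f
      show (tabPair (expM a f)).2 = Q f
      rw [hexp f]
      exact congrArg Prod.snd (hAf f)
  have hwtP : PhiTab.HasWt (fun f => (tabPair (expM a f)).1) μ := by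
    have he : (fun f => (tabPair (expM a f)).1) = P := congrArg Prod.fst hPsi
    rw [he]
    exact hPw
  have hwtQ : PhiTab.HasWt (fun f => (tabPair (expM a f)).2) μ := by
    have he : (fun f => (tabPair (expM a f)).2) = Q := congrArg Prod.snd hPsi
    rw [he]
    exact hQw
  refine ⟨a, ⟨hmon, ?_, ?_⟩, hPsi⟩
  · intro i
    have h1 := hwtQ i.1
    rw [Psi0_wt2 a hmon i.1, getD_lt μ i.2,
      ← Fin.sum_univ_eq_sum_range
        (fun j' => ∑ f ∈ sSet a, f.1.natDegree * Ae (expM a f) i.1 j') μ.length,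
      Finset.sum_congr rfl (fun j _ => inner_deg a hmon i.2 j.2)] at h1
    simpa [Fin.eta] using h1
  · intro j
    have h1 := hwtP j.1
    rw [Psi0_wt1 a hmon j.1, getD_lt μ j.2,
      ← Fin.sum_univ_eq_sum_range
        (fun i' => ∑ f ∈ sSet a, f.1.natDegree * Ae (expM a f) i' j.1) μ.length,
      Finset.sum_congr rfl (fun i _ => inner_deg a hmon i.2 j.2)] at h1
    simpa [Fin.eta] using h1

end RSKP

/-- There is a bijection between `M_μ` and the set of pairs `(P, Q)` of
`Φ`-column-strict tableaux with the same shape and weight `μ`. -/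
theorem Mmu_equiv_pairs {F : Type} [Field F] [Fintype F] [DecidableEq F]
    (n : ℕ) (hn : 1 ≤ n)
    (μ : List ℕ) (hpos : ∀ x ∈ μ, 0 < x) (hsum : μ.sum = n) :
    Nonempty (↥(Mmu F μ) ≃
      ↥{PQ : PhiTab F × PhiTab F |
          PQ.1.IsCS ∧ PQ.2.IsCS ∧ (∀ f, (PQ.1 f).1 = (PQ.2 f).1) ∧
          PQ.1.HasWt μ ∧ PQ.2.HasWt μ}) := by
  refine ⟨Equiv.ofBijective (fun x => ⟨RSKP.Psi0 x.1, RSKP.Psi0_mem μ x.1 x.2⟩) ⟨?_, ?_⟩⟩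
  · intro x y h
    apply Subtype.ext
    exact RSKP.Psi0_inj x.1 y.1 x.2.1 y.2.1 (congrArg Subtype.val h)
  · rintro ⟨⟨P, Q⟩, hmem⟩
    obtain ⟨h1, h2, h3, h4, h5⟩ := hmem
    obtain ⟨a, haM, hPsi⟩ := RSKP.Psi0_surj μ P Q h1 h2 h3 h4 h5
    exact ⟨⟨a, haM⟩, Subtype.ext hPsi⟩
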